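/- arXiv:2310.00173 — 5 statements merged into one kernel-verified Lean document; each statement's English description precedes it below -/
import Mathlib

section
/- If α ∈ ℝ^d is such that 1, α_1, ..., α_d are ℚ-linearly dependent, then for every η ≥ 0 the set of accumulation points of NA_η(α) is not all of ℝ^d. Consequently K_d^c ⊆ D(η)^c for all η ≥ 0, where K_d is the set of α with 1, α_1, ..., α_d ℚ-linearly independent. -/
open Filter Topology

/-- The set of η-normalized approximations to α ∈ ℝ^d. -/
noncomputable def NA (d : ℕ) (η : ℝ) (α : Fin d → ℝ) : Set (Fin d → ℝ) :=
  {x | ∃ q : ℤ, q ≠ 0 ∧ ∃ p : Fin d → ℤ,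
    x = fun i => |(q : ℝ)| ^ η * ((q : ℝ) * α i - (p i : ℝ))}

/-- γ is an accumulation point of S ⊆ ℝ^d. -/
def IsAccumulationPt {d : ℕ} (γ : Fin d → ℝ) (S : Set (Fin d → ℝ)) : Prop :=
  ∀ ε : ℝ, 0 < ε → ∃ x ∈ S, x ≠ γ ∧ ‖x - γ‖ < ε

/-- If 1, α_1, ..., α_d are ℚ-linearly dependent then, for every η ≥ 0, the set of
    accumulation points of NA_η(α) is not all of ℝ^d; that is, K_d^c ⊆ D(η)^c. -/
theorem stmt5 (d : ℕ) (α : Fin d → ℝ)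
    (h : ¬ LinearIndependent ℚ (Fin.cons (1 : ℝ) α : Fin (d + 1) → ℝ))
    (η : ℝ) (hη : 0 ≤ η) :
    ¬ ∀ γ : Fin d → ℝ, IsAccumulationPt γ (NA d η α) := by
  rw [Fintype.not_linearIndependent_iff] at h
  obtain ⟨c, hc, i₀, hi₀⟩ := h
  -- clear denominators
  set N : ℕ := ∏ i, (c i).den with hN
  have hNne : (N : ℚ) ≠ 0 := by
    have : 0 < N := Finset.prod_pos (fun i _ => (c i).pos)
    exact_mod_cast this.ne'
  have hk : ∀ i, ∃ kk : ℤ, (kk : ℚ) = c i * N := by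
    intro i
    obtain ⟨mm, hmm⟩ := Finset.dvd_prod_of_mem (fun j => (c j).den) (Finset.mem_univ i)
    refine ⟨(c i).num * mm, ?_⟩
    rw [hN, hmm]
    push_cast
    rw [← mul_assoc, Rat.mul_den_eq_num]
  choose k hk using hk
  -- the relation over ℝ with integer coefficients
  have hrel0 : ∑ i, (k i : ℝ) * (Fin.cons (1 : ℝ) α : Fin (d + 1) → ℝ) i = 0 := by
    have e : ∑ i, (k i : ℝ) * (Fin.cons (1 : ℝ) α : Fin (d + 1) → ℝ) i
        = (N : ℝ) * ∑ i, c i • (Fin.cons (1 : ℝ) α : Fin (d + 1) → ℝ) i := by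
      rw [Finset.mul_sum]
      refine Finset.sum_congr rfl fun i _ => ?_
      have e2 : ((k i : ℚ) : ℝ) = ((c i * N : ℚ) : ℝ) := by rw [hk i]
      push_cast at e2
      rw [Rat.smul_def, e2]
      push_cast
      ring
    rw [e, hc, mul_zero]
  have hrel : (k 0 : ℝ) + ∑ i, (k i.succ : ℝ) * α i = 0 := by
    rw [Fin.sum_univ_succ] at hrel0
    simpa using hrel0
  have hki₀ : k i₀ ≠ 0 := by
    intro h0
    apply hi₀
    have e := (hk i₀).symm
    rw [h0] at e
    push_cast at e
    rcases mul_eq_zero.mp e with h | h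
    · exact h
    · exact absurd h hNne
  -- find a nonzero coefficient among the k i.succ
  have hj : ∃ j : Fin d, k j.succ ≠ 0 := by
    by_contra hallz
    push_neg at hallz
    have hz : ∑ i, (k i.succ : ℝ) * α i = 0 := by
      refine Finset.sum_eq_zero fun i _ => ?_
      rw [hallz i]; simp
    have hA0 : (k 0 : ℝ) = 0 := by linarith
    have hA0' : k 0 = 0 := by exact_mod_cast hA0
    rcases Fin.eq_zero_or_eq_succ i₀ with h0 | ⟨j, hj⟩
    · rw [h0] at hki₀; exact hki₀ hA0'
    · rw [hj] at hki₀; exact hki₀ (hallz j)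
  obtain ⟨j, hbj⟩ := hj
  have hbjR : ((k j.succ : ℤ) : ℝ) ≠ 0 := by exact_mod_cast hbj
  intro hall
  set b : Fin d → ℤ := fun i => k i.succ with hb
  set S : ℝ := ∑ i, |(b i : ℝ)| with hS
  have hS1 : (1 : ℝ) ≤ S := by
    have h1 : (1 : ℝ) ≤ |(b j : ℝ)| := by
      have h2 : (1 : ℤ) ≤ |b j| := Int.one_le_abs hbj
      calc (1:ℝ) ≤ ((|b j| : ℤ) : ℝ) := by exact_mod_cast h2
        _ = |(b j : ℝ)| := by push_cast; ring
    exact le_trans h1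
      (Finset.single_le_sum (f := fun i => |(b i : ℝ)|) (fun i _ => abs_nonneg _)
        (Finset.mem_univ j))
  set γ : Fin d → ℝ := fun i => if i = j then 1 / (2 * (b j : ℝ)) else 0 with hγ
  have hLγ : ∑ i, (b i : ℝ) * γ i = 1 / 2 := by
    rw [hγ]
    simp only [mul_ite, mul_zero]
    rw [Finset.sum_ite_eq' Finset.univ j]
    simp only [Finset.mem_univ, if_true]
    field_simp
    exact mul_inv_cancel₀ hbjR
  have hε : (0 : ℝ) < 1 / (2 * (S + 1)) := by positivity
  obtain ⟨x, hxNA, hxne, hxd⟩ := hall γ (1 / (2 * (S + 1))) hε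
  obtain ⟨q, hq, p, hxdef⟩ := hxNA
  have hq1 : (1 : ℝ) ≤ |(q : ℝ)| := by
    have h2 : (1 : ℤ) ≤ |q| := Int.one_le_abs hq
    calc (1:ℝ) ≤ ((|q| : ℤ) : ℝ) := by exact_mod_cast h2
      _ = |(q : ℝ)| := by push_cast; ring
  have hrpow : (1 : ℝ) ≤ |(q : ℝ)| ^ η := Real.one_le_rpow hq1 hη
  have hrpow0 : (0 : ℝ) < |(q : ℝ)| ^ η := by linarith
  set m : ℤ := -(q * k 0) - ∑ i, b i * p i with hm
  have hLx : ∑ i, (b i : ℝ) * x i = |(q : ℝ)| ^ η * (m : ℝ) := by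
    have hsum : ∑ i, (b i : ℝ) * α i = -((k 0 : ℤ) : ℝ) := by
      have : ∑ i, (b i : ℝ) * α i = ∑ i, ((k i.succ : ℤ) : ℝ) * α i := rfl
      rw [this]; linarith
    rw [hxdef]
    have e : ∑ i, (b i : ℝ) * (|(q : ℝ)| ^ η * ((q : ℝ) * α i - (p i : ℝ)))
        = |(q : ℝ)| ^ η * ((q : ℝ) * ∑ i, (b i : ℝ) * α i - ∑ i, (b i : ℝ) * (p i : ℝ)) := by
      simp only [mul_sub, Finset.mul_sum, ← Finset.sum_sub_distrib]
      exact Finset.sum_congr rfl fun i _ => by ring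
    rw [e, hsum, hm]
    push_cast
    ring
  have hbound : |∑ i, (b i : ℝ) * x i - 1 / 2| < 1 / 2 := by
    have e1 : ∑ i, (b i : ℝ) * x i - 1 / 2 = ∑ i, (b i : ℝ) * (x i - γ i) := by
      rw [← hLγ, ← Finset.sum_sub_distrib]
      exact Finset.sum_congr rfl fun i _ => by ring
    rw [e1]
    calc |∑ i, (b i : ℝ) * (x i - γ i)| ≤ ∑ i, |(b i : ℝ) * (x i - γ i)| :=
          Finset.abs_sum_le_sum_abs _ _
      _ ≤ ∑ i, |(b i : ℝ)| * ‖x - γ‖ := by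
          refine Finset.sum_le_sum fun i _ => ?_
          rw [abs_mul]
          refine mul_le_mul_of_nonneg_left ?_ (abs_nonneg _)
          have := norm_le_pi_norm (x - γ) i
          simpa [Real.norm_eq_abs] using this
      _ = S * ‖x - γ‖ := by rw [← Finset.sum_mul]
      _ < S * (1 / (2 * (S + 1))) := mul_lt_mul_of_pos_left hxd (by linarith)
      _ < 1 / 2 := by
          rw [mul_one_div, div_lt_div_iff₀ (by linarith) (by norm_num)]
          linarith
  rw [hLx] at hbound
  rcases abs_lt.mp hbound with ⟨hl, hr⟩
  have hL0 : 0 < |(q : ℝ)| ^ η * (m : ℝ) := by linarith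
  have hL1 : |(q : ℝ)| ^ η * (m : ℝ) < 1 := by linarith
  have hmpos : (0 : ℝ) < (m : ℝ) := by
    rcases mul_pos_iff.mp hL0 with ⟨_, h⟩ | ⟨h, _⟩
    · exact h
    · linarith
  have hm1 : (1 : ℝ) ≤ (m : ℝ) := by
    have : (0 : ℤ) < m := by exact_mod_cast hmpos
    exact_mod_cast this
  nlinarith
end

section
/- Let d ∈ ℕ, d ≥ 2, and ω ≥ 1/d. If α ∈ ℝ^d satisfies lim_{Q→∞} Q^ω · min_{0 < q ≤ Q} ‖qα‖ = 0, then α satisfies lim_{R→∞} R^{d-1+dω} · min{ ‖r·α‖ : r ∈ ℤ^d, 0 < |r| ≤ R } = 0, where r·α is the dot product. -/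
open Filter Topology

set_option maxHeartbeats 1000000

/-- Sup-norm distance from x ∈ ℝ^d to the nearest integer vector. -/
noncomputable def distZd {d : ℕ} (x : Fin d → ℝ) : ℝ :=
  ⨅ p : Fin d → ℤ, ‖x - (fun i => (p i : ℝ))‖

/-- Distance from a real number to the nearest integer. -/
noncomputable def distZ (x : ℝ) : ℝ := ⨅ p : ℤ, |x - (p : ℝ)|

lemma distZd_nonneg {d : ℕ} (x : Fin d → ℝ) : 0 ≤ distZd x :=
  le_ciInf fun _ => norm_nonneg _

lemma distZ_nonneg (x : ℝ) : 0 ≤ distZ x := le_ciInf fun _ => abs_nonneg _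

lemma distZ_le (x : ℝ) (m : ℤ) : distZ x ≤ |x - m| :=
  ciInf_le ⟨0, by rintro y ⟨p, rfl⟩; exact abs_nonneg _⟩ m

lemma floor_eq_abs_lt {x y c : ℝ} (hc : 0 < c) (h : ⌊x/c⌋ = ⌊y/c⌋) : |x - y| < c := by
  have h1 := Int.floor_le (x/c)
  have h2 := Int.lt_floor_add_one (x/c)
  have h3 := Int.floor_le (y/c)
  have h4 := Int.lt_floor_add_one (y/c)
  rw [h] at h1 h2
  rw [abs_lt]
  constructor
  · rw [neg_lt, ← div_lt_one hc, neg_div, sub_div]; linarith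
  · rw [← div_lt_one hc, sub_div]; linarith

lemma core (d : ℕ) (hd : 2 ≤ d) (K : ℕ) (hK : 1 ≤ K) (q : ℕ) (hq : 1 ≤ q) (hqQ : q ≤ K ^ d)
    (α : Fin d → ℝ) (p : Fin d → ℤ) (δ ε : ℝ) (hδ : 0 ≤ δ) (hε : 0 < ε)
    (hap : ∀ i, |(q : ℝ) * α i - (p i : ℝ)| ≤ δ)
    (hδε : 3 * δ ≤ ε * (K : ℝ) ^ (d - 1)) :
    ∃ r : Fin d → ℤ, r ≠ 0 ∧ (∀ i, |r i| ≤ ((d + 1) * K : ℤ)) ∧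
      distZ (∑ i, (r i : ℝ) * α i) ≤ ε := by
  haveI : NeZero q := ⟨by omega⟩
  set γ : Fin d → ℝ := fun i => (q : ℝ) * α i - (p i : ℝ) with hγ
  set S : ℝ := d * ((d + 1) * K) * δ with hS
  have hS0 : 0 ≤ S := by positivity
  set c : ℝ := q * ε with hc
  have hc0 : 0 < c := by positivity
  set L : ℤ := ⌊S / c⌋ with hL
  have hL0 : 0 ≤ L := Int.floor_nonneg.2 (by positivity)
  set s : Finset (Fin d → ℤ) := Fintype.piFinset (fun _ => Finset.Icc 0 (((d : ℤ) + 1) * K))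
    with hs
  set t : Finset (ZMod q × ℤ) := Finset.univ ×ˢ Finset.Icc (-(L + 1)) L with ht
  set F : (Fin d → ℤ) → ZMod q × ℤ := fun r =>
    (((∑ i, r i * p i : ℤ) : ZMod q), ⌊(∑ i, (r i : ℝ) * γ i) / c⌋) with hF
  -- value bound
  have hv : ∀ r ∈ s, |∑ i, (r i : ℝ) * γ i| ≤ S := by
    intro r hr
    calc |∑ i, (r i : ℝ) * γ i| ≤ ∑ i, |(r i : ℝ) * γ i| := Finset.abs_sum_le_sum_abs _ _
      _ ≤ ∑ _i : Fin d, ((d + 1) * K) * δ := by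
          apply Finset.sum_le_sum
          intro i _
          rw [abs_mul]
          apply mul_le_mul _ (hap i) (abs_nonneg _) (by positivity)
          rw [Fintype.mem_piFinset] at hr
          have := hr i
          rw [Finset.mem_Icc] at this
          rw [abs_of_nonneg (by exact_mod_cast this.1 : (0:ℝ) ≤ (r i : ℝ))]
          exact_mod_cast this.2
      _ = S := by rw [Finset.sum_const, Finset.card_univ, Fintype.card_fin]; push_cast [hS]; ring
  have hmaps : ∀ r ∈ s, F r ∈ t := by
    intro r hr
    rw [ht, Finset.mem_product]
    refine ⟨Finset.mem_univ _, ?_⟩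
    rw [Finset.mem_Icc]
    have hv' := hv r hr
    rw [abs_le] at hv'
    have h1 : S / c < (L : ℝ) + 1 := Int.lt_floor_add_one _
    constructor
    · rw [Int.le_floor]
      push_cast
      have h2 : -S / c ≤ (∑ i, (r i : ℝ) * γ i) / c := by gcongr; exact hv'.1
      rw [neg_div] at h2
      linarith
    · apply Int.floor_le_floor
      gcongr
      exact hv'.2
  -- cardinalities
  have hcards : (s.card : ℝ) = (((d:ℝ) + 1) * K + 1) ^ d := by
    rw [hs, Fintype.card_piFinset]
    simp only [Int.card_Icc, sub_zero]
    rw [Finset.prod_const, Finset.card_univ, Fintype.card_fin]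
    have h1 := Int.toNat_of_nonneg (by positivity : (0:ℤ) ≤ ((d:ℤ) + 1) * (K:ℤ) + 1)
    have h2 : (((((d:ℤ) + 1) * (K:ℤ) + 1).toNat : ℕ) : ℝ) = ((d:ℝ) + 1) * K + 1 := by
      exact_mod_cast h1
    push_cast
    rw [h2]
  have hcardt : (t.card : ℝ) = q * (2 * L + 2) := by
    rw [ht, Finset.card_product, Finset.card_univ, ZMod.card, Int.card_Icc]
    have : (L + 1 - -(L+1)) = 2*L + 2 := by ring
    rw [this]
    have h1 := Int.toNat_of_nonneg (by omega : (0:ℤ) ≤ 2 * L + 2)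
    have h2 : (((2 * L + 2).toNat : ℕ) : ℝ) = 2 * (L:ℝ) + 2 := by exact_mod_cast h1
    push_cast
    rw [h2]
  have hcard : t.card < s.card := by
    have hd1 : (2:ℝ) ≤ (d:ℝ) := by exact_mod_cast hd
    have hK1 : (1:ℝ) ≤ (K:ℝ) := by exact_mod_cast hK
    have hLS : (L : ℝ) ≤ S / c := Int.floor_le _
    have hq1 : (1:ℝ) ≤ (q:ℝ) := by exact_mod_cast hq
    have hqK : (q:ℝ) ≤ (K:ℝ) ^ d := by exact_mod_cast hqQ
    have key1 : (t.card : ℝ) ≤ 2 * S / ε + 2 * (K:ℝ)^d := by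
      rw [hcardt]
      have : (q:ℝ) * (2 * L + 2) ≤ (q:ℝ) * (2 * (S/c) + 2) := by
        apply mul_le_mul_of_nonneg_left (by linarith) (by linarith)
      calc (q:ℝ) * (2 * L + 2) ≤ (q:ℝ) * (2 * (S/c) + 2) := this
        _ = 2 * S / ε + 2 * q := by rw [hc]; field_simp
        _ ≤ 2 * S / ε + 2 * (K:ℝ)^d := by linarith
    have hδe : δ / ε ≤ (K:ℝ)^(d-1) / 3 := by
      rw [div_le_div_iff₀ hε (by norm_num)]
      linarith
    have key2 : 2 * S / ε ≤ (2/3) * (d * ((d:ℝ)+1)) * (K:ℝ)^d := by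
      rw [hS]
      have : (2:ℝ) * ((d:ℝ) * (((d:ℝ) + 1) * K) * δ) / ε
          = (2 * ((d:ℝ) * (((d:ℝ) + 1) * K))) * (δ / ε) := by ring
      rw [this]
      have hnn : (0:ℝ) ≤ 2 * ((d:ℝ) * (((d:ℝ) + 1) * K)) := by positivity
      calc (2 * ((d:ℝ) * (((d:ℝ) + 1) * K))) * (δ / ε)
          ≤ (2 * ((d:ℝ) * (((d:ℝ) + 1) * K))) * ((K:ℝ)^(d-1) / 3) :=
            mul_le_mul_of_nonneg_left hδe hnn
        _ = (2/3) * (d * ((d:ℝ)+1)) * ((K:ℝ) * (K:ℝ)^(d-1)) := by ring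
        _ = (2/3) * (d * ((d:ℝ)+1)) * (K:ℝ)^d := by
            rw [← pow_succ']
            congr 2
            omega
    have key3 : ((2:ℝ)/3) * (d * ((d:ℝ)+1)) * (K:ℝ)^d + 2 * (K:ℝ)^d < (((d:ℝ)+1)*K + 1)^d := by
      have hKd0 : (0:ℝ) ≤ (K:ℝ)^d := by positivity
      have h3 : ((d:ℝ)+1)^2 ≤ ((d:ℝ)+1)^d := pow_le_pow_right₀ (by linarith) hd
      have h4 : ((2:ℝ)/3) * ((d:ℝ) * ((d:ℝ)+1)) + 2 ≤ ((d:ℝ)+1)^2 := by nlinarith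
      have h5 : (((2:ℝ)/3) * ((d:ℝ) * ((d:ℝ)+1)) + 2) * (K:ℝ)^d ≤ ((d:ℝ)+1)^d * (K:ℝ)^d :=
        mul_le_mul_of_nonneg_right (le_trans h4 h3) hKd0
      have h1 : (((d:ℝ)+1)*(K:ℝ))^d < (((d:ℝ)+1)*K + 1)^d :=
        pow_lt_pow_left₀ (by linarith) (by positivity) (by omega)
      rw [mul_pow] at h1
      nlinarith
    have : (t.card : ℝ) < (s.card : ℝ) := by rw [hcards]; linarith
    exact_mod_cast this
  obtain ⟨r₁, hr₁, r₂, hr₂, hne, hFeq⟩ := Finset.exists_ne_map_eq_of_card_lt_of_maps_to hcard hmaps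
  refine ⟨r₁ - r₂, sub_ne_zero_of_ne hne, ?_, ?_⟩
  · intro i
    rw [Fintype.mem_piFinset] at hr₁ hr₂
    have h1 := hr₁ i; have h2 := hr₂ i
    rw [Finset.mem_Icc] at h1 h2
    simp only [Pi.sub_apply]
    rw [abs_le]
    constructor <;> push_cast <;> [linarith [h1.1, h2.2]; linarith [h1.2, h2.1]]
  · have hmod : ((∑ i, r₁ i * p i : ℤ) : ZMod q) = ((∑ i, r₂ i * p i : ℤ) : ZMod q) :=
      congrArg Prod.fst hFeq
    have hfl : ⌊(∑ i, (r₁ i : ℝ) * γ i) / c⌋ = ⌊(∑ i, (r₂ i : ℝ) * γ i) / c⌋ :=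
      congrArg Prod.snd hFeq
    have hdvd : (q:ℤ) ∣ ∑ i, (r₁ i - r₂ i) * p i := by
      rw [← ZMod.intCast_zmod_eq_zero_iff_dvd]
      push_cast
      push_cast at hmod
      simp only [sub_mul, Finset.sum_sub_distrib, hmod, sub_self]
    obtain ⟨m, hm⟩ := hdvd
    have habs : |∑ i, ((r₁ i - r₂ i : ℤ) : ℝ) * γ i| < c := by
      have hsplit : ∑ i, ((r₁ i - r₂ i : ℤ) : ℝ) * γ i
          = (∑ i, (r₁ i : ℝ) * γ i) - ∑ i, (r₂ i : ℝ) * γ i := by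
        rw [← Finset.sum_sub_distrib]
        congr 1; funext i; push_cast; ring
      rw [hsplit]
      exact floor_eq_abs_lt hc0 hfl
    have key : ∑ i, (((r₁ - r₂) i : ℤ) : ℝ) * α i - (m:ℝ)
        = (∑ i, ((r₁ i - r₂ i : ℤ) : ℝ) * γ i) / q := by
      have hq0 : (q:ℝ) ≠ 0 := by positivity
      have hsum : ∑ i, ((r₁ i - r₂ i : ℤ) : ℝ) * γ i
          = (q:ℝ) * (∑ i, ((r₁ i - r₂ i : ℤ) : ℝ) * α i)
            - ((∑ i, (r₁ i - r₂ i) * p i : ℤ) : ℝ) := by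
        push_cast
        rw [Finset.mul_sum, ← Finset.sum_sub_distrib]
        congr 1; funext i
        simp only [hγ]; ring
      simp only [Pi.sub_apply]
      rw [hsum, hm]
      rw [eq_div_iff hq0]
      push_cast
      ring
    calc distZ (∑ i, (((r₁ - r₂) i : ℤ) : ℝ) * α i)
        ≤ |∑ i, (((r₁ - r₂) i : ℤ) : ℝ) * α i - (m:ℝ)| := distZ_le _ m
      _ = |∑ i, ((r₁ i - r₂ i : ℤ) : ℝ) * γ i| / q := by
          rw [key, abs_div, abs_of_nonneg (by positivity : (0:ℝ) ≤ (q:ℝ))]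
      _ ≤ ε := by
          rw [div_le_iff₀ (by positivity)]
          rw [hc] at habs
          linarith

/-- If lim_{Q→∞} Q^ω · min_{0<q≤Q} ‖qα‖ = 0 then
    lim_{R→∞} R^{d-1+dω} · min{‖r·α‖ : r ∈ ℤ^d, 0 < |r| ≤ R} = 0
    (d ≥ 2, ω ≥ 1/d). -/
theorem stmt6 (d : ℕ) (hd : 2 ≤ d) (ω : ℝ) (hω : 1 / (d : ℝ) ≤ ω) (α : Fin d → ℝ)
    (h : Tendsto (fun Q : ℕ => (Q : ℝ) ^ ω *
        sInf {x : ℝ | ∃ q : ℕ, 0 < q ∧ q ≤ Q ∧ x = distZd (fun i => (q : ℝ) * α i)})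
      atTop (𝓝 0)) :
    Tendsto (fun R : ℕ => (R : ℝ) ^ ((d : ℝ) - 1 + d * ω) *
        sInf {x : ℝ | ∃ r : Fin d → ℤ, r ≠ 0 ∧ (∀ i, |r i| ≤ (R : ℤ)) ∧
          x = distZ (∑ i, (r i : ℝ) * α i)})
      atTop (𝓝 0) := by
  have hd1 : (1:ℝ) ≤ (d:ℝ) := by
    have : (1:ℕ) ≤ d := by omega
    exact_mod_cast this
  have hd0 : (0:ℝ) < (d:ℝ) := by linarith
  have hω0 : 0 < ω := lt_of_lt_of_le (by positivity) hω
  have hdω : 1 ≤ (d:ℝ) * ω := by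
    rw [div_le_iff₀ hd0] at hω; linarith
  have he0 : 0 ≤ (d:ℝ) - 1 + (d:ℝ) * ω := by linarith
  rw [NormedAddCommGroup.tendsto_nhds_zero] at h ⊢
  intro ε hε
  set C : ℝ := 3 * (2 * ((d:ℝ) + 1)) ^ ((d:ℝ) - 1 + (d:ℝ) * ω) with hCdef
  have hC0 : 0 < C := by positivity
  set ε₁ : ℝ := ε / (2 * C) with hε₁def
  have hε₁ : 0 < ε₁ := by positivity
  obtain ⟨N, hN⟩ := Filter.eventually_atTop.mp (h ε₁ hε₁)
  rw [Filter.eventually_atTop]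
  refine ⟨(d+1) * (N+1) + (d+1), fun R hR => ?_⟩
  set K : ℕ := R / (d+1) with hKdef
  have hK1 : N + 1 ≤ K := by
    rw [hKdef]
    rw [Nat.le_div_iff_mul_le (by omega : 0 < d + 1)]
    calc (N+1)*(d+1) = (d+1)*(N+1) := Nat.mul_comm _ _
      _ ≤ R := le_trans (Nat.le_add_right _ _) hR
  have hK : 1 ≤ K := by omega
  have hKpos : (0:ℝ) < (K:ℝ) := by exact_mod_cast hK
  have hK1' : (1:ℝ) ≤ (K:ℝ) := by exact_mod_cast hK
  have hMR : (d+1) * K ≤ R := by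
    rw [hKdef, mul_comm]; exact Nat.div_mul_le_self R (d+1)
  have hdm := Nat.div_add_mod R (d+1)
  rw [← hKdef] at hdm
  have hmod : R % (d+1) < d+1 := Nat.mod_lt _ (by omega)
  have hdmR : ((d:ℝ)+1) * (K:ℝ) + ((R % (d+1) : ℕ):ℝ) = (R:ℝ) := by exact_mod_cast hdm
  have hmodR : ((R % (d+1) : ℕ):ℝ) ≤ (d:ℝ) + 1 := by
    have : (R % (d+1) : ℕ) ≤ d + 1 := by omega
    exact_mod_cast this
  have hRle : (R:ℝ) ≤ 2 * ((d:ℝ)+1) * (K:ℝ) := by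
    have h2 : ((d:ℝ)+1) ≤ ((d:ℝ)+1) * (K:ℝ) :=
      le_mul_of_one_le_right (by linarith) hK1'
    nlinarith
  set Q : ℕ := K ^ d with hQdef
  have hNQ : N ≤ Q := le_trans (by omega : N ≤ K) (Nat.le_self_pow (by omega) K)
  have hQ1 : 1 ≤ Q := Nat.one_le_pow _ _ (by omega)
  have hQbound := hN Q hNQ
  have hSQne : {x : ℝ | ∃ q : ℕ, 0 < q ∧ q ≤ Q ∧ x = distZd (fun i => (q : ℝ) * α i)}.Nonempty :=
    ⟨_, 1, one_pos, hQ1, rfl⟩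
  have hSQbdd : BddBelow {x : ℝ | ∃ q : ℕ, 0 < q ∧ q ≤ Q ∧ x = distZd (fun i => (q : ℝ) * α i)} :=
    ⟨0, by rintro x ⟨q, _, _, rfl⟩; exact distZd_nonneg _⟩
  have hQpos : (0:ℝ) < (Q:ℝ) ^ ω := Real.rpow_pos_of_pos (by exact_mod_cast hQ1) _
  have hsinf0 : 0 ≤ sInf {x : ℝ | ∃ q : ℕ, 0 < q ∧ q ≤ Q ∧ x = distZd (fun i => (q : ℝ) * α i)} :=
    le_csInf hSQne (by rintro x ⟨q, _, _, rfl⟩; exact distZd_nonneg _)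
  rw [Real.norm_eq_abs, abs_of_nonneg (mul_nonneg hQpos.le hsinf0)] at hQbound
  set δ : ℝ := ε₁ / (Q:ℝ)^ω with hδdef
  have hδ0 : 0 < δ := by positivity
  have hsinf : sInf {x : ℝ | ∃ q : ℕ, 0 < q ∧ q ≤ Q ∧ x = distZd (fun i => (q : ℝ) * α i)} < δ := by
    rw [hδdef, lt_div_iff₀ hQpos]
    linarith [hQbound, mul_comm ((Q:ℝ)^ω)
      (sInf {x : ℝ | ∃ q : ℕ, 0 < q ∧ q ≤ Q ∧ x = distZd (fun i => (q : ℝ) * α i)})]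
  obtain ⟨x, hxS, hx⟩ := (csInf_lt_iff hSQbdd hSQne).mp hsinf
  obtain ⟨q, hq0, hqQ, rfl⟩ := hxS
  rw [distZd] at hx
  obtain ⟨p, hp⟩ := exists_lt_of_ciInf_lt hx
  have hap : ∀ i, |(q:ℝ) * α i - (p i : ℝ)| ≤ δ := by
    intro i
    have h1 := norm_le_pi_norm ((fun i => (q:ℝ) * α i) - fun i => (p i : ℝ)) i
    simp only [Pi.sub_apply, Real.norm_eq_abs] at h1
    linarith
  set ε' : ℝ := 3 * δ / (K:ℝ)^(d-1) with hε'def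
  have hKd1pos : (0:ℝ) < (K:ℝ)^(d-1) := by positivity
  have hε'0 : 0 < ε' := by positivity
  obtain ⟨r, hr0, hrB, hrd⟩ := core d hd K hK q hq0 hqQ α p δ ε' hδ0.le hε'0 hap
    (le_of_eq (div_mul_cancel₀ (3*δ) (ne_of_gt hKd1pos)).symm)
  have hrB' : ∀ i, |r i| ≤ (R:ℤ) := by
    intro i
    refine le_trans (hrB i) ?_
    have : (((d+1)*K : ℕ) : ℤ) ≤ (R : ℤ) := by exact_mod_cast hMR
    push_cast at this ⊢
    linarith
  have hmem : distZ (∑ i, (r i:ℝ) * α i) ∈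
      {x : ℝ | ∃ r : Fin d → ℤ, r ≠ 0 ∧ (∀ i, |r i| ≤ (R:ℤ)) ∧
        x = distZ (∑ i, (r i : ℝ) * α i)} := ⟨r, hr0, hrB', rfl⟩
  have hSRbdd : BddBelow {x : ℝ | ∃ r : Fin d → ℤ, r ≠ 0 ∧ (∀ i, |r i| ≤ (R:ℤ)) ∧
      x = distZ (∑ i, (r i : ℝ) * α i)} :=
    ⟨0, by rintro x ⟨r', _, _, rfl⟩; exact distZ_nonneg _⟩
  have hsr : sInf {x : ℝ | ∃ r : Fin d → ℤ, r ≠ 0 ∧ (∀ i, |r i| ≤ (R:ℤ)) ∧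
      x = distZ (∑ i, (r i : ℝ) * α i)} ≤ ε' := le_trans (csInf_le hSRbdd hmem) hrd
  have hsr0 : 0 ≤ sInf {x : ℝ | ∃ r : Fin d → ℤ, r ≠ 0 ∧ (∀ i, |r i| ≤ (R:ℤ)) ∧
      x = distZ (∑ i, (r i : ℝ) * α i)} :=
    le_csInf ⟨_, hmem⟩ (by rintro x ⟨r', _, _, rfl⟩; exact distZ_nonneg _)
  have hRnn : (0:ℝ) ≤ (R:ℝ) := Nat.cast_nonneg R
  have hRpow : (0:ℝ) ≤ (R:ℝ) ^ ((d:ℝ) - 1 + (d:ℝ) * ω) := Real.rpow_nonneg hRnn _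
  rw [Real.norm_eq_abs, abs_of_nonneg (mul_nonneg hRpow hsr0)]
  -- key computation
  have hQω : ((Q:ℕ):ℝ)^ω = (K:ℝ)^((d:ℝ)*ω) := by
    rw [hQdef]
    push_cast
    rw [← Real.rpow_natCast (K:ℝ) d, ← Real.rpow_mul hKpos.le]
  have hKd1 : ((K:ℝ))^(d-1 : ℕ) = (K:ℝ)^((d:ℝ)-1) := by
    rw [← Real.rpow_natCast (K:ℝ) (d-1)]
    congr 1
    have : ((d - 1 : ℕ) : ℝ) = (d:ℝ) - 1 := by
      have : (1:ℕ) ≤ d := by omega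
      push_cast [Nat.cast_sub this]
      ring
    rw [this]
  have hKe : (K:ℝ)^((d:ℝ) - 1 + (d:ℝ)*ω) * ε' = 3 * ε₁ := by
    rw [hε'def, hδdef, hQω, hKd1, Real.rpow_add hKpos]
    have h1 : (K:ℝ)^((d:ℝ)-1) ≠ 0 := ne_of_gt (Real.rpow_pos_of_pos hKpos _)
    have h2 : (K:ℝ)^((d:ℝ)*ω) ≠ 0 := ne_of_gt (Real.rpow_pos_of_pos hKpos _)
    field_simp
  have step2 : (R:ℝ)^((d:ℝ) - 1 + (d:ℝ)*ω) ≤ (2*((d:ℝ)+1)*(K:ℝ))^((d:ℝ) - 1 + (d:ℝ)*ω) :=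
    Real.rpow_le_rpow hRnn hRle he0
  have hsplit : (2*((d:ℝ)+1)*(K:ℝ))^((d:ℝ) - 1 + (d:ℝ)*ω)
      = (2*((d:ℝ)+1))^((d:ℝ) - 1 + (d:ℝ)*ω) * (K:ℝ)^((d:ℝ) - 1 + (d:ℝ)*ω) :=
    Real.mul_rpow (by positivity) (by positivity)
  have hfinal : (R:ℝ)^((d:ℝ) - 1 + (d:ℝ)*ω) *
      sInf {x : ℝ | ∃ r : Fin d → ℤ, r ≠ 0 ∧ (∀ i, |r i| ≤ (R:ℤ)) ∧
        x = distZ (∑ i, (r i : ℝ) * α i)} ≤ C * ε₁ := by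
    calc (R:ℝ)^((d:ℝ) - 1 + (d:ℝ)*ω) * sInf {x : ℝ | ∃ r : Fin d → ℤ, r ≠ 0 ∧
          (∀ i, |r i| ≤ (R:ℤ)) ∧ x = distZ (∑ i, (r i : ℝ) * α i)}
        ≤ (R:ℝ)^((d:ℝ) - 1 + (d:ℝ)*ω) * ε' := mul_le_mul_of_nonneg_left hsr hRpow
      _ ≤ (2*((d:ℝ)+1)*(K:ℝ))^((d:ℝ) - 1 + (d:ℝ)*ω) * ε' :=
          mul_le_mul_of_nonneg_right step2 hε'0.le
      _ = (2*((d:ℝ)+1))^((d:ℝ) - 1 + (d:ℝ)*ω) * ((K:ℝ)^((d:ℝ) - 1 + (d:ℝ)*ω) * ε') := by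
          rw [hsplit]; ring
      _ = (2*((d:ℝ)+1))^((d:ℝ) - 1 + (d:ℝ)*ω) * (3 * ε₁) := by rw [hKe]
      _ = C * ε₁ := by rw [hCdef]; ring
  have : C * ε₁ = ε / 2 := by
    rw [hε₁def]
    field_simp
  linarith
end

section
/- Let K be a real cubic field (K ⊆ ℝ, [K:ℚ] = 3) and let u ∈ O_K be a unit with u ≠ ±1. If K has a complex embedding σ_1 with σ_1(u) = |σ_1(u)| e^{2πiθ}, then θ is irrational. -/
open NumberField
open IntermediateField

/-- Let K be a real cubic field (it embeds in ℝ, [K:ℚ] = 3) and u a unit of O_K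
    with u ≠ ±1. If σ₁ is a complex embedding of K and
    σ₁(u) = |σ₁(u)| e^{2πiθ}, then θ is irrational. -/
theorem stmt12 (K : Type*) [Field K] [NumberField K]
    (h3 : Module.finrank ℚ K = 3) (ι : K →+* ℝ)
    (u : (𝓞 K)ˣ) (hu1 : (u : 𝓞 K) ≠ 1) (hu2 : (u : 𝓞 K) ≠ -1)
    (σ₁ : K →+* ℂ) (hσ : ∃ x : K, (σ₁ x).im ≠ 0)
    (θ : ℝ)
    (hθ : σ₁ (algebraMap (𝓞 K) K (u : 𝓞 K)) =
      (‖σ₁ (algebraMap (𝓞 K) K (u : 𝓞 K))‖ : ℂ) *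
        Complex.exp (2 * Real.pi * Complex.I * θ)) :
    Irrational θ := by
  set x : K := algebraMap (𝓞 K) K (u : 𝓞 K) with hxdef
  rintro ⟨r, hr⟩
  set q : ℕ := r.den with hqdef
  have hq0 : q ≠ 0 := r.den_nz
  -- (q : ℝ) * θ = r.num
  have hq : (q : ℝ) * θ = (r.num : ℝ) := by
    rw [← hr]
    rw [mul_comm]
    exact_mod_cast congrArg (fun t : ℚ => (t : ℝ)) (Rat.mul_den_eq_num r)
  have hqC : (q : ℂ) * (θ : ℂ) = (r.num : ℂ) := by exact_mod_cast congrArg Complex.ofReal hq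
  have hexp : Complex.exp (2 * Real.pi * Complex.I * θ) ^ q = 1 := by
    rw [← Complex.exp_nat_mul]
    have h1 : (q : ℂ) * (2 * Real.pi * Complex.I * θ) = (r.num : ℂ) * (2 * Real.pi * Complex.I) := by
      linear_combination (2 * (Real.pi : ℂ) * Complex.I) * hqC
    rw [h1, Complex.exp_int_mul_two_pi_mul_I]
  -- σ₁ (x ^ q) is real
  obtain ⟨a, ha⟩ : ∃ a : ℝ, a = ‖σ₁ x‖ := ⟨_, rfl⟩
  rw [← ha] at hθ
  have hy : σ₁ (x ^ q) = ((a ^ q : ℝ) : ℂ) := by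
    rw [map_pow, hθ, mul_pow, hexp, mul_one]
    push_cast
    ring
  have him : (σ₁ (x ^ q)).im = 0 := by rw [hy]; exact Complex.ofReal_im _
  -- the intermediate field ℚ⟮x^q⟯
  have hdvd : Module.finrank ℚ ℚ⟮x ^ q⟯ ∣ 3 := by
    rw [← h3]
    exact ⟨Module.finrank ℚ⟮x ^ q⟯ K, (Module.finrank_mul_finrank ℚ ℚ⟮x ^ q⟯ K).symm⟩
  have h13 : Module.finrank ℚ ℚ⟮x ^ q⟯ = 1 ∨ Module.finrank ℚ ℚ⟮x ^ q⟯ = 3 :=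
    (Nat.prime_three).eq_one_or_self_of_dvd _ hdvd
  rcases h13 with h1 | h3'
  · -- degree 1 : x ^ q rational
    have hbot : ℚ⟮x ^ q⟯ = ⊥ := IntermediateField.finrank_eq_one_iff.mp h1
    have hmem : x ^ q ∈ (⊥ : IntermediateField ℚ K) := by
      rw [← hbot]; exact IntermediateField.mem_adjoin_simple_self ℚ (x ^ q)
    rw [IntermediateField.mem_bot] at hmem
    obtain ⟨s, hs⟩ := hmem
    -- s and s⁻¹ are integral over ℤ, so s = ±1
    have hint : IsIntegral ℤ (x ^ q) := by
      have : x ^ q = algebraMap (𝓞 K) K ((u : 𝓞 K) ^ q) := by rw [map_pow]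
      rw [this]
      exact RingOfIntegers.isIntegral_coe _
    have hsint : IsIntegral ℤ s := by
      rw [← isIntegral_algebraMap_iff (algebraMap ℚ K).injective, hs]; exact hint
    obtain ⟨n, hn⟩ := IsIntegrallyClosed.isIntegral_iff.mp hsint
    have hx0 : x ≠ 0 := by
      simp only [hxdef, ne_eq, map_eq_zero_iff _ (RingOfIntegers.coe_injective)]
      exact Units.ne_zero u
    have hs0 : s ≠ 0 := by
      rintro rfl
      rw [map_zero] at hs
      exact pow_ne_zero q hx0 hs.symm
    have hinvint : IsIntegral ℤ s⁻¹ := by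
      rw [← isIntegral_algebraMap_iff (algebraMap ℚ K).injective]
      have hxinv : (algebraMap (𝓞 K) K) ((u⁻¹ : (𝓞 K)ˣ) : 𝓞 K) * x = 1 := by
        rw [hxdef, ← map_mul]
        norm_num
      have : algebraMap ℚ K s⁻¹ = algebraMap (𝓞 K) K (((u⁻¹ : (𝓞 K)ˣ) : 𝓞 K) ^ q) := by
        rw [map_inv₀, hs, map_pow, ← inv_pow]
        congr 1
        exact (inv_eq_of_mul_eq_one_left hxinv)
      rw [this]
      exact RingOfIntegers.isIntegral_coe _
    obtain ⟨m, hm⟩ := IsIntegrallyClosed.isIntegral_iff.mp hinvint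
    have hnm : n * m = 1 := by
      have h : (algebraMap ℤ ℚ) (n * m) = 1 := by
        rw [map_mul, hn, hm]
        exact mul_inv_cancel₀ hs0
      rw [eq_intCast] at h
      exact_mod_cast h
    have hn1 : n = 1 ∨ n = -1 := Int.isUnit_iff.mp (IsUnit.of_mul_eq_one _ hnm)
    -- hence x ^ q = ± 1, and via ι, x = ± 1
    have htq : (ι x) ^ q = 1 ∨ (ι x) ^ q = -1 := by
      have hιx : (ι x) ^ q = (s : ℝ) := by
        rw [← map_pow, ← hs, eq_ratCast (algebraMap ℚ K), map_ratCast]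
      rcases hn1 with h | h <;> [left; right] <;>
        simp [hιx, ← hn, h]
    have habs : |ι x| = 1 := by
      have habsq : |ι x| ^ q = 1 := by
        rw [← abs_pow]
        rcases htq with h | h <;> simp [h]
      rcases lt_trichotomy (|ι x|) 1 with h | h | h
      · have := pow_lt_one₀ (abs_nonneg _) h hq0
        simp [habsq] at this
      · exact h
      · have := one_lt_pow₀ h hq0
        simp [habsq] at this
    have hx1 : x = 1 ∨ x = -1 := by
      rcases abs_eq (by norm_num : (0:ℝ) ≤ 1) |>.mp habs with h | h
      · left; apply ι.injective; rw [h, map_one]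
      · right; apply ι.injective; rw [h]; simp
    rcases hx1 with h | h
    · exact hu1 (RingOfIntegers.coe_injective (by rw [← hxdef, h, map_one]))
    · exact hu2 (RingOfIntegers.coe_injective (by rw [← hxdef, h]; simp))
  · -- degree 3 : ℚ⟮x^q⟯ = ⊤, contradiction with complex embedding
    have hT : ℚ⟮x ^ q⟯ = ⊤ := by
      apply IntermediateField.eq_of_le_of_finrank_eq le_top
      rw [h3', IntermediateField.finrank_top', h3]
    obtain ⟨z, hz⟩ := hσ
    set φ₁ : K →ₐ[ℚ] ℂ := σ₁.toRatAlgHom with hφ₁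
    set φ₂ : K →ₐ[ℚ] ℂ := ((starRingEnd ℂ).comp σ₁).toRatAlgHom with hφ₂
    have key : φ₁.comp (IntermediateField.val ℚ⟮x ^ q⟯) =
        φ₂.comp (IntermediateField.val ℚ⟮x ^ q⟯) := by
      apply IntermediateField.adjoin_algHom_ext
      rintro y (rfl : y = x ^ q)
      show σ₁ (x ^ q) = (starRingEnd ℂ) (σ₁ (x ^ q))
      exact (Complex.conj_eq_iff_im.mpr him).symm
    have hzmem : z ∈ ℚ⟮x ^ q⟯ := hT ▸ IntermediateField.mem_top
    have := congrArg (fun f => f ⟨z, hzmem⟩) key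
    simp only [AlgHom.comp_apply] at this
    have hzz : σ₁ z = (starRingEnd ℂ) (σ₁ z) := this
    rw [eq_comm, Complex.conj_eq_iff_im] at hzz
    exact hz hzz
end

section
/- Let K ⊆ ℝ be a totally real cubic field and let u_1, u_2 be a pair of multiplicatively independent units in an order of K, with u_a = u_1^{2a_1} u_2^{2a_2} for a ∈ ℤ². For any constants 0 < c_1 < c_2, the set U(c_1, c_2) = { u_a > 1 : a ∈ ℤ², c_1 < σ_1(u_a)/σ_2(u_a) < c_2 } is infinite. -/
open NumberField IntermediateField Set


lemma dense_form (f₁ f₂ : ℝ)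
    (hF : ∀ a : ℤ × ℤ, (a.1 : ℝ) * f₁ + a.2 * f₂ = 0 → a = 0) :
    ∀ lo hi : ℝ, lo < hi → ∃ a : ℤ × ℤ, (a.1 : ℝ) * f₁ + a.2 * f₂ ∈ Set.Ioo lo hi := by
  set F : ℤ × ℤ → ℝ := fun a => (a.1 : ℝ) * f₁ + a.2 * f₂ with hFdef
  have hadd : ∀ a b : ℤ × ℤ, F (a + b) = F a + F b := by
    intro a b; simp only [hFdef, Prod.fst_add, Prod.snd_add]; push_cast; ring
  let Fh : ℤ × ℤ →+ ℝ := AddMonoidHom.mk' F hadd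
  rcases AddSubgroup.dense_or_cyclic Fh.range with hd | ⟨c, hc⟩
  · intro lo hi h
    obtain ⟨y, hy, hy2⟩ := hd.exists_mem_open isOpen_Ioo (nonempty_Ioo.2 h)
    obtain ⟨a, ha⟩ := hy
    refine ⟨a, ?_⟩
    have : F a = y := ha
    rw [show (a.1 : ℝ) * f₁ + a.2 * f₂ = F a from rfl, this]
    exact hy2
  · exfalso
    rw [← AddSubgroup.zmultiples_eq_closure] at hc
    have h1 : F (1, 0) ∈ Fh.range := ⟨(1, 0), rfl⟩
    have h2 : F (0, 1) ∈ Fh.range := ⟨(0, 1), rfl⟩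
    rw [hc, AddSubgroup.mem_zmultiples_iff] at h1 h2
    obtain ⟨m, hm⟩ := h1
    obtain ⟨n, hn⟩ := h2
    have e1 : F (1, 0) = f₁ := by simp [hFdef]
    have e2 : F (0, 1) = f₂ := by simp [hFdef]
    rw [e1] at hm; rw [e2] at hn
    have key : F (n, -m) = 0 := by
      simp only [hFdef]
      push_cast
      rw [← hm, ← hn]
      simp [zsmul_eq_mul]; ring
    have h0 := hF _ key
    have hn0 : n = 0 := by simpa using congrArg Prod.fst h0
    have hm0 : m = 0 := by
      have := congrArg Prod.snd h0; simp at this; omega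
    have hf10 : f₁ = 0 := by rw [← hm, hm0]; simp
    have := hF (1, 0) (by simp [hf10])
    simpa using congrArg Prod.fst this

lemma infinite_form_Ioo (f₁ f₂ : ℝ)
    (hF : ∀ a : ℤ × ℤ, (a.1 : ℝ) * f₁ + a.2 * f₂ = 0 → a = 0)
    (y δ : ℝ) (hδ : 0 < δ) :
    {a : ℤ × ℤ | (a.1 : ℝ) * f₁ + a.2 * f₂ ∈ Set.Ioo y (y + δ)}.Infinite := by
  set F : ℤ × ℤ → ℝ := fun a => (a.1 : ℝ) * f₁ + a.2 * f₂ with hFdef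
  have h : ∀ k : ℕ, ∃ a : ℤ × ℤ, F a ∈ Set.Ioo (y + δ / 2 ^ (k + 2)) (y + δ / 2 ^ (k + 1)) := by
    intro k
    refine dense_form f₁ f₂ hF _ _ ?_
    have : (2:ℝ) ^ (k+1) < 2 ^ (k+2) := by
      apply pow_lt_pow_right₀ one_lt_two (by omega)
    have h1 : δ / 2 ^ (k + 2) < δ / 2 ^ (k + 1) :=
      div_lt_div_of_pos_left hδ (by positivity) this
    linarith
  choose u hu using h
  have hFu : ∀ a : ℤ × ℤ, F a = (a.1 : ℝ) * f₁ + a.2 * f₂ := fun _ => rfl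
  clear_value F
  have hmono : ∀ k l : ℕ, k < l → F (u l) < F (u k) := by
    intro k l hkl
    have h1 := (hu k).1
    have h2 := (hu l).2
    have hle : δ / 2 ^ (l + 1) ≤ δ / 2 ^ (k + 2) := by
      apply div_le_div_of_nonneg_left hδ.le (by positivity)
      apply pow_le_pow_right₀ one_le_two (by omega)
    calc F (u l) < y + δ / 2 ^ (l + 1) := h2
      _ ≤ y + δ / 2 ^ (k + 2) := by linarith
      _ < F (u k) := h1
  have hinj : Function.Injective u := by
    intro k l hkl
    by_contra hne
    rcases Nat.lt_or_ge k l with h | h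
    · exact absurd (congrArg F hkl) (ne_of_gt (hmono k l h))
    · have : l < k := by omega
      exact absurd (congrArg F hkl) (ne_of_lt (hmono l k (by omega)))
  apply Set.infinite_of_injective_forall_mem hinj
  intro k
  have h1 := (hu k).1
  have h2 := (hu k).2
  have hp : (0:ℝ) < δ / 2 ^ (k+2) := by positivity
  have hq : δ / 2 ^ (k + 1) ≤ δ := by
    apply div_le_self hδ.le; exact one_le_pow₀ one_le_two
  constructor
  · rw [← hFu (u k)]; linarith
  · rw [← hFu (u k)]; linarith

lemma small_step (f₁ f₂ : ℝ)
    (hF : ∀ a : ℤ × ℤ, (a.1 : ℝ) * f₁ + a.2 * f₂ = 0 → a = 0)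
    (δ : ℝ) (hδ : 0 < δ) :
    ∃ d : ℤ × ℤ, 0 < d.2 ∧ |(d.1 : ℝ) * f₁ + d.2 * f₂| < δ := by
  have hf₁ : f₁ ≠ 0 := by
    intro h
    have := hF (1, 0) (by simp [h])
    simpa using congrArg Prod.fst this
  set S : Set (ℤ × ℤ) := {a : ℤ × ℤ | (a.1 : ℝ) * f₁ + a.2 * f₂ ∈ Set.Ioo 0 (0 + δ)} with hS
  have hSinf : S.Infinite := infinite_form_Ioo f₁ f₂ hF 0 δ hδ
  have hex : ∃ c ∈ S, ∃ c' ∈ S, c.2 ≠ c'.2 := by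
    by_contra hcon
    push_neg at hcon
    obtain ⟨c₀, hc₀⟩ := hSinf.nonempty
    set B : ℤ := ⌈(δ + |(c₀.2 : ℝ) * f₂|) / |f₁|⌉ with hB
    have hsub : S ⊆ Set.Icc ((-B, c₀.2)) ((B, c₀.2)) := by
      intro a ha
      have h2 : a.2 = c₀.2 := hcon a ha c₀ hc₀
      have hFa := ha
      simp only [hS, Set.mem_setOf_eq, Set.mem_Ioo, zero_add] at hFa
      have habs : |(a.1 : ℝ) * f₁| ≤ δ + |(c₀.2 : ℝ) * f₂| := by
        have e : (a.1 : ℝ) * f₁ = ((a.1 : ℝ) * f₁ + a.2 * f₂) - (a.2 : ℝ) * f₂ := by ring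
        have h3 := abs_sub ((a.1 : ℝ) * f₁ + a.2 * f₂) ((a.2 : ℝ) * f₂)
        rw [← e] at h3
        have h4 : |(a.1 : ℝ) * f₁ + a.2 * f₂| ≤ δ := by
          rw [abs_le]; exact ⟨by linarith [hFa.1], by linarith [hFa.2]⟩
        have h5 : |(a.2 : ℝ) * f₂| = |(c₀.2 : ℝ) * f₂| := by rw [h2]
        linarith
      have h1 : |(a.1 : ℝ)| ≤ (B : ℝ) := by
        have hf : 0 < |f₁| := abs_pos.mpr hf₁
        rw [abs_mul] at habs
        have : |(a.1 : ℝ)| ≤ (δ + |(c₀.2 : ℝ) * f₂|) / |f₁| := by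
          rw [le_div_iff₀ hf]; exact habs
        exact this.trans (Int.le_ceil _)
      have h1' : |a.1| ≤ B := by
        have : ((|a.1| : ℤ) : ℝ) ≤ (B : ℝ) := by push_cast; exact h1
        exact_mod_cast this
      rw [abs_le] at h1'
      constructor <;> exact ⟨by omega, by omega⟩
    exact hSinf (Set.Finite.subset (Set.finite_Icc _ _) hsub)
  obtain ⟨c, hc, c', hc', hne⟩ := hex
  simp only [hS, Set.mem_setOf_eq, Set.mem_Ioo, zero_add] at hc hc'
  have key : |((c.1 - c'.1 : ℤ) : ℝ) * f₁ + ((c.2 - c'.2 : ℤ) : ℝ) * f₂| < δ := by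
    push_cast
    have : ((c.1 : ℝ) - c'.1) * f₁ + ((c.2 : ℝ) - c'.2) * f₂ =
        ((c.1 : ℝ) * f₁ + c.2 * f₂) - ((c'.1 : ℝ) * f₁ + c'.2 * f₂) := by ring
    rw [this, abs_sub_lt_iff]
    constructor <;> [linarith [hc.1, hc.2, hc'.1, hc'.2]; linarith [hc.1, hc.2, hc'.1, hc'.2]]
  rcases lt_or_gt_of_ne hne with h | h
  · refine ⟨(c'.1 - c.1, c'.2 - c.2), by simp; omega, ?_⟩
    show |((c'.1 - c.1 : ℤ) : ℝ) * f₁ + ((c'.2 - c.2 : ℤ) : ℝ) * f₂| < δ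
    have heq : ((c'.1 - c.1 : ℤ) : ℝ) * f₁ + ((c'.2 - c.2 : ℤ) : ℝ) * f₂ =
        -(((c.1 - c'.1 : ℤ) : ℝ) * f₁ + ((c.2 - c'.2 : ℤ) : ℝ) * f₂) := by push_cast; ring
    rw [heq, abs_neg]; exact key
  · refine ⟨(c.1 - c'.1, c.2 - c'.2), by simp; omega, ?_⟩
    show |((c.1 - c'.1 : ℤ) : ℝ) * f₁ + ((c.2 - c'.2 : ℤ) : ℝ) * f₂| < δ
    exact key

lemma exists_extreme (f₁ f₂ α β : ℝ) (hab : α < β)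
    (hF : ∀ a : ℤ × ℤ, (a.1 : ℝ) * f₁ + a.2 * f₂ = 0 → a = 0) (M : ℤ) :
    (∃ a : ℤ × ℤ, ((a.1 : ℝ) * f₁ + a.2 * f₂) ∈ Set.Ioo α β ∧ M < a.2) ∧
    (∃ a : ℤ × ℤ, ((a.1 : ℝ) * f₁ + a.2 * f₂) ∈ Set.Ioo α β ∧ a.2 < M) := by
  obtain ⟨b, hb⟩ := dense_form f₁ f₂ hF α β hab
  set Fb := (b.1 : ℝ) * f₁ + b.2 * f₂ with hFb
  set ε : ℝ := min (Fb - α) (β - Fb) with hε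
  have hεpos : 0 < ε := by
    rw [hε]; rcases hb with ⟨h1, h2⟩
    exact lt_min (by linarith) (by linarith)
  set T : ℤ := |M| + |b.2| + 1 with hT
  have hT1 : 1 ≤ T := by rw [hT]; linarith [abs_nonneg M, abs_nonneg b.2]
  have hTR : (0:ℝ) < (T:ℝ) := by exact_mod_cast (show (0:ℤ) < T by linarith)
  obtain ⟨d, hd2, hdsmall⟩ := small_step f₁ f₂ hF (ε / (2 * T)) (by positivity)
  constructor
  · refine ⟨(b.1 + T * d.1, b.2 + T * d.2), ?_, ?_⟩
    · show ((b.1 + T * d.1 : ℤ) : ℝ) * f₁ + ((b.2 + T * d.2 : ℤ) : ℝ) * f₂ ∈ Set.Ioo α β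
      have heq : ((b.1 + T * d.1 : ℤ) : ℝ) * f₁ + ((b.2 + T * d.2 : ℤ) : ℝ) * f₂ =
          Fb + (T : ℝ) * ((d.1 : ℝ) * f₁ + d.2 * f₂) := by rw [hFb]; push_cast; ring
      rw [heq]
      have : |(T : ℝ) * ((d.1 : ℝ) * f₁ + d.2 * f₂)| < ε := by
        rw [abs_mul, abs_of_pos hTR]
        calc (T:ℝ) * |(d.1 : ℝ) * f₁ + d.2 * f₂| < (T:ℝ) * (ε / (2 * T)) := by
              apply mul_lt_mul_of_pos_left hdsmall hTR
          _ = ε / 2 := by field_simp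
          _ < ε := by linarith
      rw [abs_lt] at this
      have hε1 : ε ≤ Fb - α := min_le_left _ _
      have hε2 : ε ≤ β - Fb := min_le_right _ _
      exact ⟨by linarith [this.1], by linarith [this.2]⟩
    · show M < b.2 + T * d.2
      have hstep : T ≤ T * d.2 := le_mul_of_one_le_right (by linarith) (by omega)
      have hM := le_abs_self M
      have hb2 := neg_abs_le b.2
      have hTe : T = |M| + |b.2| + 1 := hT
      linarith
  · refine ⟨(b.1 - T * d.1, b.2 - T * d.2), ?_, ?_⟩
    · show ((b.1 - T * d.1 : ℤ) : ℝ) * f₁ + ((b.2 - T * d.2 : ℤ) : ℝ) * f₂ ∈ Set.Ioo α β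
      have heq : ((b.1 - T * d.1 : ℤ) : ℝ) * f₁ + ((b.2 - T * d.2 : ℤ) : ℝ) * f₂ =
          Fb - (T : ℝ) * ((d.1 : ℝ) * f₁ + d.2 * f₂) := by rw [hFb]; push_cast; ring
      rw [heq]
      have : |(T : ℝ) * ((d.1 : ℝ) * f₁ + d.2 * f₂)| < ε := by
        rw [abs_mul, abs_of_pos hTR]
        calc (T:ℝ) * |(d.1 : ℝ) * f₁ + d.2 * f₂| < (T:ℝ) * (ε / (2 * T)) := by
              apply mul_lt_mul_of_pos_left hdsmall hTR
          _ = ε / 2 := by field_simp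
          _ < ε := by linarith
      rw [abs_lt] at this
      have hε1 : ε ≤ Fb - α := min_le_left _ _
      have hε2 : ε ≤ β - Fb := min_le_right _ _
      exact ⟨by linarith [this.2], by linarith [this.1]⟩
    · show b.2 - T * d.2 < M
      have hstep : T ≤ T * d.2 := le_mul_of_one_le_right (by linarith) (by omega)
      have hM := neg_abs_le M
      have hb2 := le_abs_self b.2
      have hTe : T = |M| + |b.2| + 1 := hT
      linarith

lemma key_infinite (f₁ f₂ g₁ g₂ α β : ℝ) (hab : α < β)
    (hF : ∀ a : ℤ × ℤ, (a.1 : ℝ) * f₁ + a.2 * f₂ = 0 → a = 0)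
    (hG : ∀ a : ℤ × ℤ, (a.1 : ℝ) * g₁ + a.2 * g₂ = 0 → a = 0)
    (hD : g₂ * f₁ - g₁ * f₂ ≠ 0) :
    {a : ℤ × ℤ | ((a.1 : ℝ) * f₁ + a.2 * f₂) ∈ Set.Ioo α β ∧
      0 < (a.1 : ℝ) * g₁ + a.2 * g₂}.Infinite := by
  have hf₁ : f₁ ≠ 0 := by
    intro h
    have := hF (1, 0) (by simp [h])
    simpa using congrArg Prod.fst this
  set D : ℝ := g₂ * f₁ - g₁ * f₂ with hDdef
  set C : ℝ := |g₁| * (|α| + |β|) with hCdef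
  have hC : 0 ≤ C := by positivity
  have hDf : D * f₁ ≠ 0 := mul_ne_zero hD hf₁
  -- key bound: for any a with F a ∈ Ioo α β and suitable a.2, G a > 0
  have main : ∀ a : ℤ × ℤ, ((a.1 : ℝ) * f₁ + a.2 * f₂) ∈ Set.Ioo α β →
      (C + 1) * |f₁| < (a.2 : ℝ) * (D * f₁) → 0 < (a.1 : ℝ) * g₁ + a.2 * g₂ := by
    intro a hmem hbig
    have hFa : |(a.1 : ℝ) * f₁ + a.2 * f₂| ≤ |α| + |β| := by
      rw [abs_le]
      constructor
      · have := hmem.1; have := neg_abs_le α; linarith [abs_nonneg β]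
      · have := hmem.2; have := le_abs_self β; linarith [abs_nonneg α]
    have hgF : |g₁ * ((a.1 : ℝ) * f₁ + a.2 * f₂)| ≤ C := by
      rw [abs_mul, hCdef]
      exact mul_le_mul_of_nonneg_left hFa (abs_nonneg g₁)
    have hid : f₁ * (f₁ * ((a.1 : ℝ) * g₁ + a.2 * g₂)) =
        f₁ * (g₁ * ((a.1 : ℝ) * f₁ + a.2 * f₂)) + (a.2 : ℝ) * (D * f₁) := by
      rw [hDdef]; ring
    have hbound : -(|f₁| * C) ≤ f₁ * (g₁ * ((a.1 : ℝ) * f₁ + a.2 * f₂)) := by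
      have h1 : |f₁ * (g₁ * ((a.1 : ℝ) * f₁ + a.2 * f₂))| ≤ |f₁| * C := by
        rw [abs_mul]
        exact mul_le_mul_of_nonneg_left hgF (abs_nonneg f₁)
      linarith [neg_abs_le (f₁ * (g₁ * ((a.1 : ℝ) * f₁ + a.2 * f₂)))]
    have hpos : 0 < f₁ * (f₁ * ((a.1 : ℝ) * g₁ + a.2 * g₂)) := by
      rw [hid]
      have : |f₁| * C ≤ (C + 1) * |f₁| - |f₁| := by
        have : (C + 1) * |f₁| - |f₁| = C * |f₁| := by ring
        rw [this]; rw [mul_comm]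
      have habs : 0 < |f₁| := abs_pos.mpr hf₁
      linarith
    nlinarith [sq_nonneg f₁, sq_abs f₁]
  -- existence of points with arbitrarily large |a.2| in the good set
  have exmain : ∀ M : ℤ, ∃ a : ℤ × ℤ, (((a.1 : ℝ) * f₁ + a.2 * f₂) ∈ Set.Ioo α β ∧
      0 < (a.1 : ℝ) * g₁ + a.2 * g₂) ∧ M < |a.2| := by
    intro M
    rcases hDf.lt_or_gt with hneg | hpos
    · -- D * f₁ < 0 : take a.2 very negative
      set q : ℝ := (C + 1) * |f₁| / (D * f₁) with hq
      set z : ℤ := min (-|M|) ⌊q⌋ with hz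
      obtain ⟨a, hmem, ha2⟩ := (exists_extreme f₁ f₂ α β hab hF z).2
      refine ⟨a, ⟨hmem, ?_⟩, ?_⟩
      · apply main a hmem
        have h1 : (a.2 : ℝ) < q := by
          have : (a.2 : ℝ) ≤ (z : ℝ) - 1 := by exact_mod_cast (by omega : a.2 ≤ z - 1)
          have h2 : (z : ℝ) ≤ (⌊q⌋ : ℝ) := by exact_mod_cast (min_le_right (-|M|) ⌊q⌋)
          have h3 := Int.floor_le q
          linarith
        have := mul_lt_mul_of_neg_right h1 hneg
        rwa [hq, div_mul_cancel₀ _ (by exact hDf)] at this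
      · have : a.2 < -|M| := lt_of_lt_of_le ha2 (min_le_left _ _)
        have := le_abs_self M
        have := neg_abs_le a.2
        omega
    · -- 0 < D * f₁ : take a.2 very positive
      set q : ℝ := (C + 1) * |f₁| / (D * f₁) with hq
      set z : ℤ := max |M| ⌈q⌉ with hz
      obtain ⟨a, hmem, ha2⟩ := (exists_extreme f₁ f₂ α β hab hF z).1
      refine ⟨a, ⟨hmem, ?_⟩, ?_⟩
      · apply main a hmem
        have h1 : q < (a.2 : ℝ) := by
          have h0 : (z : ℝ) + 1 ≤ (a.2 : ℝ) := by exact_mod_cast (by omega : z + 1 ≤ a.2)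
          have h2 : (⌈q⌉ : ℝ) ≤ (z : ℝ) := by exact_mod_cast (le_max_right |M| ⌈q⌉)
          have h3 := Int.le_ceil q
          linarith
        have := mul_lt_mul_of_pos_right h1 hpos
        rwa [hq, div_mul_cancel₀ _ (by exact hDf)] at this
      · have : |M| < a.2 := lt_of_le_of_lt (le_max_left _ _) ha2
        have := le_abs_self M
        have := le_abs_self a.2
        omega
  -- conclude
  by_contra hfin
  rw [Set.not_infinite] at hfin
  obtain ⟨Mb, hMb⟩ := (hfin.image (fun a => |a.2|)).bddAbove
  obtain ⟨a, hagood, habig⟩ := exmain Mb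
  exact absurd (hMb (Set.mem_image_of_mem _ hagood)) (by simpa using habig.not_ge)

lemma agree_rat {K : Type*} [Field K] [NumberField K] (h3 : Module.finrank ℚ K = 3)
    {σ σ' : K →+* ℝ} (hσ : σ ≠ σ') {x : K} (hx : σ x = σ' x) :
    ∃ q : ℚ, x = algebraMap ℚ K q := by
  have hint : IsIntegral ℚ x := Algebra.IsSeparable.isIntegral ℚ x
  have hmul : Module.finrank ℚ ℚ⟮x⟯ * Module.finrank ℚ⟮x⟯ K = 3 := by
    rw [Module.finrank_mul_finrank, h3]
  have hdvd : Module.finrank ℚ ℚ⟮x⟯ ∣ 3 := ⟨_, hmul.symm⟩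
  rcases Nat.prime_three.eq_one_or_self_of_dvd _ hdvd with h1 | h3'
  · have hbot : ℚ⟮x⟯ = ⊥ := IntermediateField.finrank_eq_one_iff.mp h1
    have hxmem : x ∈ ℚ⟮x⟯ := IntermediateField.mem_adjoin_simple_self ℚ x
    rw [hbot, IntermediateField.mem_bot] at hxmem
    obtain ⟨q, hq⟩ := hxmem
    exact ⟨q, hq.symm⟩
  · exfalso
    apply hσ
    have htop : ℚ⟮x⟯ = ⊤ := by
      apply IntermediateField.eq_of_le_of_finrank_le le_top
      rw [IntermediateField.finrank_top', h3, h3']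
    have hadj : Algebra.adjoin ℚ {x} = ⊤ := by
      rw [← IntermediateField.adjoin_simple_toSubalgebra_of_isAlgebraic hint.isAlgebraic, htop,
        IntermediateField.top_toSubalgebra]
    have hle : Algebra.adjoin ℚ {x} ≤ AlgHom.equalizer σ.toRatAlgHom σ'.toRatAlgHom := by
      apply Algebra.adjoin_le
      intro y hy
      rcases hy with rfl
      show σ.toRatAlgHom y = σ'.toRatAlgHom y
      exact hx
    rw [hadj] at hle
    ext y
    exact hle (show y ∈ (⊤ : Subalgebra ℚ K) from trivial)

lemma unit_sq_eq_one {K : Type*} [Field K] [NumberField K] (σ : K →+* ℝ)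
    (w : (𝓞 K)ˣ) (q : ℚ)
    (h : algebraMap (𝓞 K) K ((w ^ 2 : (𝓞 K)ˣ) : 𝓞 K) = algebraMap ℚ K q) :
    w ^ 2 = 1 := by
  have hKinj : Function.Injective (algebraMap ℚ K) := (algebraMap ℚ K).injective
  have hq0 : q ≠ 0 := by
    intro hq
    apply NumberField.Units.coe_ne_zero (w ^ 2)
    rw [h, hq, map_zero]
  have hint : IsIntegral ℤ q := by
    rw [← isIntegral_algebraMap_iff (A := ℚ) (B := K) hKinj]
    rw [← h]
    exact NumberField.RingOfIntegers.isIntegral_coe _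
  obtain ⟨z, hz⟩ := IsIntegrallyClosed.isIntegral_iff.mp hint
  have hmulu : ((w ^ 2 : (𝓞 K)ˣ) : 𝓞 K) * (((w ^ 2)⁻¹ : (𝓞 K)ˣ) : 𝓞 K) = 1 := by
    rw [← Units.val_mul, mul_inv_cancel, Units.val_one]
  have hprodK : algebraMap ℚ K q * algebraMap (𝓞 K) K (((w ^ 2)⁻¹ : (𝓞 K)ˣ) : 𝓞 K) = 1 := by
    rw [← h, ← map_mul, hmulu, map_one]
  have hinvK : algebraMap (𝓞 K) K (((w ^ 2)⁻¹ : (𝓞 K)ˣ) : 𝓞 K) = algebraMap ℚ K q⁻¹ := by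
    rw [map_inv₀]
    exact eq_inv_of_mul_eq_one_left (by rw [mul_comm] at hprodK; exact hprodK)
  have hint' : IsIntegral ℤ (q⁻¹) := by
    rw [← isIntegral_algebraMap_iff (A := ℚ) (B := K) hKinj]
    rw [← hinvK]
    exact NumberField.RingOfIntegers.isIntegral_coe _
  obtain ⟨z', hz'⟩ := IsIntegrallyClosed.isIntegral_iff.mp hint'
  have hzz : z * z' = 1 := by
    have : (z : ℚ) * (z' : ℚ) = 1 := by
      rw [show ((z:ℤ):ℚ) = algebraMap ℤ ℚ z from rfl, show ((z':ℤ):ℚ) = algebraMap ℤ ℚ z' from rfl,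
        hz, hz', mul_inv_cancel₀ hq0]
    exact_mod_cast this
  have hz1 : z = 1 ∨ z = -1 := Int.isUnit_iff.mp (IsUnit.of_mul_eq_one _ hzz)
  have hqz : q = (z : ℚ) := by rw [← hz]; rfl
  rcases hz1 with rfl | rfl
  · -- q = 1
    have h1 : algebraMap (𝓞 K) K ((w ^ 2 : (𝓞 K)ˣ) : 𝓞 K) =
        algebraMap (𝓞 K) K ((1 : (𝓞 K)ˣ) : 𝓞 K) := by
      rw [h, hqz]; simp
    exact NumberField.Units.coe_injective K h1
  · -- q = -1, contradiction with square nonneg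
    exfalso
    have hsq : σ (algebraMap (𝓞 K) K ((w ^ 2 : (𝓞 K)ˣ) : 𝓞 K)) =
        (σ (algebraMap (𝓞 K) K ((w : (𝓞 K)ˣ) : 𝓞 K))) ^ 2 := by
      rw [Units.val_pow_eq_pow_val, map_pow, map_pow]
    have hneg : σ (algebraMap (𝓞 K) K ((w ^ 2 : (𝓞 K)ˣ) : 𝓞 K)) = -1 := by
      rw [h, hqz]; push_cast; simp
    nlinarith [sq_nonneg (σ (algebraMap (𝓞 K) K ((w : (𝓞 K)ˣ) : 𝓞 K)))]

lemma emb_three {K : Type*} [Field K] [NumberField K] (h3 : Module.finrank ℚ K = 3)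
    (σ₀ σ₁ σ₂ : K →+* ℝ) (h01 : σ₀ ≠ σ₁) (h02 : σ₀ ≠ σ₂) (h12 : σ₁ ≠ σ₂) :
    ∀ φ : K →+* ℂ, φ = Complex.ofRealHom.comp σ₀ ∨ φ = Complex.ofRealHom.comp σ₁ ∨
      φ = Complex.ofRealHom.comp σ₂ := by
  classical
  have hcard : Fintype.card (K →+* ℂ) = 3 := by rw [NumberField.Embeddings.card K ℂ, h3]
  have hinj : ∀ τ τ' : K →+* ℝ, Complex.ofRealHom.comp τ = Complex.ofRealHom.comp τ' → τ = τ' := by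
    intro τ τ' h
    ext z
    have := RingHom.congr_fun h z
    simp only [RingHom.coe_comp, Function.comp_apply, Complex.ofRealHom_eq_coe] at this
    exact_mod_cast this
  set c₀ := Complex.ofRealHom.comp σ₀
  set c₁ := Complex.ofRealHom.comp σ₁
  set c₂ := Complex.ofRealHom.comp σ₂
  have h01' : c₀ ≠ c₁ := fun h => h01 (hinj _ _ h)
  have h02' : c₀ ≠ c₂ := fun h => h02 (hinj _ _ h)
  have h12' : c₁ ≠ c₂ := fun h => h12 (hinj _ _ h)
  set s : Finset (K →+* ℂ) := {c₀, c₁, c₂} with hs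
  have hscard : s.card = 3 := by
    rw [hs, Finset.card_insert_of_notMem (by simp [h01', h02']),
      Finset.card_insert_of_notMem (by simp [h12']), Finset.card_singleton]
  have huniv : s = Finset.univ := Finset.eq_univ_of_card s (by rw [hscard, hcard])
  intro φ
  have : φ ∈ s := huniv ▸ Finset.mem_univ φ
  simpa [hs, Finset.mem_insert] using this

lemma prod_three {K : Type*} [Field K] [NumberField K] (h3 : Module.finrank ℚ K = 3)
    (σ₀ σ₁ σ₂ : K →+* ℝ) (h01 : σ₀ ≠ σ₁) (h02 : σ₀ ≠ σ₂) (h12 : σ₁ ≠ σ₂)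
    (w : (𝓞 K)ˣ) :
    σ₀ (algebraMap (𝓞 K) K ↑w) * σ₁ (algebraMap (𝓞 K) K ↑w) * σ₂ (algebraMap (𝓞 K) K ↑w) = 1 ∨
    σ₀ (algebraMap (𝓞 K) K ↑w) * σ₁ (algebraMap (𝓞 K) K ↑w) * σ₂ (algebraMap (𝓞 K) K ↑w) = -1 := by
  classical
  set x : K := algebraMap (𝓞 K) K ↑w with hxdef
  have hn : |Algebra.norm ℚ x| = 1 := NumberField.Units.norm K w
  have hN : Algebra.norm ℚ x = 1 ∨ Algebra.norm ℚ x = -1 := abs_eq (by norm_num : (0:ℚ) ≤ 1) |>.mp hn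
  have hprod : algebraMap ℚ ℂ (Algebra.norm ℚ x) = ∏ φ : K →ₐ[ℚ] ℂ, φ x :=
    Algebra.norm_eq_prod_embeddings ℚ ℂ x
  have hconv : ∏ φ : K →+* ℂ, φ x = ∏ φ : K →ₐ[ℚ] ℂ, φ x := by
    apply Fintype.prod_equiv (RingHom.equivRatAlgHom K ℂ) (fun φ : K →+* ℂ => φ x)
      (fun φ : K →ₐ[ℚ] ℂ => φ x)
    intro φ
    rfl
  have hinj : ∀ τ τ' : K →+* ℝ, Complex.ofRealHom.comp τ = Complex.ofRealHom.comp τ' → τ = τ' := by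
    intro τ τ' h
    ext z
    have := RingHom.congr_fun h z
    simp only [RingHom.coe_comp, Function.comp_apply, Complex.ofRealHom_eq_coe] at this
    exact_mod_cast this
  set c₀ := Complex.ofRealHom.comp σ₀ with hc₀
  set c₁ := Complex.ofRealHom.comp σ₁ with hc₁
  set c₂ := Complex.ofRealHom.comp σ₂ with hc₂
  have h01' : c₀ ≠ c₁ := fun h => h01 (hinj _ _ h)
  have h02' : c₀ ≠ c₂ := fun h => h02 (hinj _ _ h)
  have h12' : c₁ ≠ c₂ := fun h => h12 (hinj _ _ h)
  have hcard : Fintype.card (K →+* ℂ) = 3 := by rw [NumberField.Embeddings.card K ℂ, h3]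
  set s : Finset (K →+* ℂ) := {c₀, c₁, c₂} with hs
  have hscard : s.card = 3 := by
    rw [hs, Finset.card_insert_of_notMem (by simp [h01', h02']),
      Finset.card_insert_of_notMem (by simp [h12']), Finset.card_singleton]
  have huniv : Finset.univ = s := (Finset.eq_univ_of_card s (by rw [hscard, hcard])).symm
  have hexp : ∏ φ : K →+* ℂ, φ x = c₀ x * (c₁ x * c₂ x) := by
    rw [show ∏ φ : K →+* ℂ, φ x = ∏ φ ∈ s, φ x by rw [← huniv]]
    rw [hs, Finset.prod_insert (by simp [h01', h02']),
      Finset.prod_insert (by simp [h12']), Finset.prod_singleton]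
  have hkey : (((σ₀ x * σ₁ x * σ₂ x : ℝ)) : ℂ) = algebraMap ℚ ℂ (Algebra.norm ℚ x) := by
    rw [hprod, ← hconv, hexp]
    push_cast
    rw [hc₀, hc₁, hc₂]
    simp [Complex.ofRealHom]
    ring
  rcases hN with hN | hN
  · left
    have : ((σ₀ x * σ₁ x * σ₂ x : ℝ) : ℂ) = ((1:ℝ) : ℂ) := by
      rw [hkey, hN]; norm_num
    exact_mod_cast this
  · right
    have : ((σ₀ x * σ₁ x * σ₂ x : ℝ) : ℂ) = ((-1:ℝ) : ℂ) := by
      rw [hkey, hN]; norm_num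
    exact_mod_cast this
/-- The even power products u_a = u₁^{2a₁} u₂^{2a₂}, viewed in K. -/
noncomputable def uPow (K : Type*) [Field K] [NumberField K]
    (u₁ u₂ : (𝓞 K)ˣ) (a : ℤ × ℤ) : K :=
  algebraMap (𝓞 K) K ((u₁ ^ (2 * a.1) * u₂ ^ (2 * a.2) : (𝓞 K)ˣ) : 𝓞 K)

/-- Let K be a totally real cubic field (three distinct real embeddings
    σ₀ = id, σ₁, σ₂) and u₁, u₂ multiplicatively independent units, with
    u_a = u₁^{2a₁} u₂^{2a₂} for a ∈ ℤ². For any 0 < c₁ < c₂, the set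
    U(c₁,c₂) = { u_a > 1 : a ∈ ℤ², c₁ < σ₁(u_a)/σ₂(u_a) < c₂ } is infinite. -/
theorem stmt14 (K : Type*) [Field K] [NumberField K]
    (h3 : Module.finrank ℚ K = 3) (σ₀ σ₁ σ₂ : K →+* ℝ)
    (h01 : σ₀ ≠ σ₁) (h02 : σ₀ ≠ σ₂) (h12 : σ₁ ≠ σ₂)
    (u₁ u₂ : (𝓞 K)ˣ)
    (hind : ∀ m n : ℤ, u₁ ^ m * u₂ ^ n = 1 → m = 0 ∧ n = 0)
    (c₁ c₂ : ℝ) (hc₁ : 0 < c₁) (hc : c₁ < c₂) :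
    {x : ℝ | ∃ a : ℤ × ℤ, x = σ₀ (uPow K u₁ u₂ a) ∧ 1 < σ₀ (uPow K u₁ u₂ a) ∧
      c₁ < σ₁ (uPow K u₁ u₂ a) / σ₂ (uPow K u₁ u₂ a) ∧
      σ₁ (uPow K u₁ u₂ a) / σ₂ (uPow K u₁ u₂ a) < c₂}.Infinite := by
  classical
  set b₁ : K := algebraMap (𝓞 K) K ↑u₁ with hb₁
  set b₂ : K := algebraMap (𝓞 K) K ↑u₂ with hb₂
  have hb₁0 : b₁ ≠ 0 := NumberField.Units.coe_ne_zero u₁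
  have hb₂0 : b₂ ≠ 0 := NumberField.Units.coe_ne_zero u₂
  have hupow : ∀ a : ℤ × ℤ, uPow K u₁ u₂ a = b₁ ^ (2 * a.1) * b₂ ^ (2 * a.2) := by
    intro a
    show algebraMap (𝓞 K) K ((u₁ ^ (2 * a.1) * u₂ ^ (2 * a.2) : (𝓞 K)ˣ) : 𝓞 K) = _
    rw [Units.val_mul, map_mul, NumberField.Units.coe_zpow, NumberField.Units.coe_zpow]
  have hσe : ∀ (σ : K →+* ℝ) (a : ℤ × ℤ), σ (uPow K u₁ u₂ a)
      = (σ b₁ ^ 2) ^ a.1 * (σ b₂ ^ 2) ^ a.2 := by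
    intro σ a
    have e : ∀ t : ℝ, t ^ (2 : ℤ) = t ^ 2 := fun t => by rw [zpow_two, pow_two]
    rw [hupow, map_mul, map_zpow₀, map_zpow₀, zpow_mul, zpow_mul, e, e]
  have hPP : ∀ σ : K →+* ℝ, 0 < σ b₁ ^ 2 ∧ 0 < σ b₂ ^ 2 := by
    intro σ
    constructor
    · exact sq_pos_of_ne_zero ((map_ne_zero_iff σ σ.injective).mpr hb₁0)
    · exact sq_pos_of_ne_zero ((map_ne_zero_iff σ σ.injective).mpr hb₂0)
  have hval : ∀ (σ : K →+* ℝ) (a : ℤ × ℤ), 0 < σ (uPow K u₁ u₂ a) := by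
    intro σ a
    rw [hσe]
    exact mul_pos (zpow_pos (hPP σ).1 _) (zpow_pos (hPP σ).2 _)
  have hlog : ∀ (σ : K →+* ℝ) (a : ℤ × ℤ), Real.log (σ (uPow K u₁ u₂ a))
      = a.1 * Real.log (σ b₁ ^ 2) + a.2 * Real.log (σ b₂ ^ 2) := by
    intro σ a
    rw [hσe, Real.log_mul (zpow_ne_zero _ (ne_of_gt (hPP σ).1))
      (zpow_ne_zero _ (ne_of_gt (hPP σ).2)), Real.log_zpow, Real.log_zpow]
  set g1 : ℝ := Real.log (σ₀ b₁ ^ 2) with hg1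
  set g2 : ℝ := Real.log (σ₀ b₂ ^ 2) with hg2
  set q1 : ℝ := Real.log (σ₁ b₁ ^ 2) with hq1
  set q2 : ℝ := Real.log (σ₁ b₂ ^ 2) with hq2
  set r1 : ℝ := Real.log (σ₂ b₁ ^ 2) with hr1
  set r2 : ℝ := Real.log (σ₂ b₂ ^ 2) with hr2
  set f1 : ℝ := q1 - r1 with hf1
  set f2 : ℝ := q2 - r2 with hf2
  -- injectivity of a ↦ uPow a and related
  have hsqpres : ∀ a : ℤ × ℤ, (u₁ ^ (2 * a.1) * u₂ ^ (2 * a.2) : (𝓞 K)ˣ)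
      = (u₁ ^ a.1 * u₂ ^ a.2) ^ 2 := by
    intro a
    have e : ∀ (u : (𝓞 K)ˣ) (n : ℤ), u ^ (2 * n) = (u ^ n) ^ 2 := by
      intro u n
      rw [← zpow_natCast (u ^ n) 2, ← zpow_mul]
      congr 1
      push_cast
      ring
    rw [e u₁ a.1, e u₂ a.2, ← mul_pow]
  have hone : ∀ a : ℤ × ℤ, uPow K u₁ u₂ a = 1 → a = 0 := by
    intro a h
    have h1 : (u₁ ^ (2 * a.1) * u₂ ^ (2 * a.2) : (𝓞 K)ˣ) = 1 := by
      apply NumberField.Units.coe_injective K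
      exact h.trans (by simp)
    obtain ⟨e1, e2⟩ := hind _ _ h1
    exact Prod.ext (show a.1 = 0 by omega) (show a.2 = 0 by omega)
  have hUinj : ∀ a a' : ℤ × ℤ, uPow K u₁ u₂ a = uPow K u₁ u₂ a' → a = a' := by
    intro a a' h
    have h1 : (u₁ ^ (2 * a.1) * u₂ ^ (2 * a.2) : (𝓞 K)ˣ)
        = u₁ ^ (2 * a'.1) * u₂ ^ (2 * a'.2) := NumberField.Units.coe_injective K h
    have h2 : (u₁ ^ (2 * a.1 - 2 * a'.1) * u₂ ^ (2 * a.2 - 2 * a'.2) : (𝓞 K)ˣ) = 1 := by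
      rw [zpow_sub, zpow_sub, mul_mul_mul_comm, ← mul_inv, h1, mul_inv_cancel]
    obtain ⟨e1, e2⟩ := hind _ _ h2
    exact Prod.ext (show a.1 = a'.1 by omega) (show a.2 = a'.2 by omega)
  -- the two linear forms are injective
  have hF : ∀ a : ℤ × ℤ, (a.1 : ℝ) * f1 + (a.2 : ℝ) * f2 = 0 → a = 0 := by
    intro a ha
    have h1 : Real.log (σ₁ (uPow K u₁ u₂ a)) = Real.log (σ₂ (uPow K u₁ u₂ a)) := by
      rw [hlog σ₁ a, hlog σ₂ a, ← hq1, ← hq2, ← hr1, ← hr2]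
      rw [hf1, hf2] at ha
      linarith
    have heq : σ₁ (uPow K u₁ u₂ a) = σ₂ (uPow K u₁ u₂ a) := by
      rw [← Real.exp_log (hval σ₁ a), ← Real.exp_log (hval σ₂ a), h1]
    obtain ⟨q, hq⟩ := agree_rat h3 h12 heq
    have hcast : algebraMap (𝓞 K) K (((u₁ ^ a.1 * u₂ ^ a.2) ^ 2 : (𝓞 K)ˣ) : 𝓞 K)
        = algebraMap ℚ K q := by
      rw [← hsqpres a]
      exact hq
    have hw2 := unit_sq_eq_one σ₀ (u₁ ^ a.1 * u₂ ^ a.2) q hcast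
    rw [← hsqpres a] at hw2
    obtain ⟨e1, e2⟩ := hind _ _ hw2
    exact Prod.ext (show a.1 = 0 by omega) (show a.2 = 0 by omega)
  have hG : ∀ a : ℤ × ℤ, (a.1 : ℝ) * g1 + (a.2 : ℝ) * g2 = 0 → a = 0 := by
    intro a ha
    have h1 : Real.log (σ₀ (uPow K u₁ u₂ a)) = 0 := by
      rw [hlog σ₀ a, ← hg1, ← hg2]; exact ha
    have heq : σ₀ (uPow K u₁ u₂ a) = 1 := by
      rw [← Real.exp_log (hval σ₀ a), h1, Real.exp_zero]
    exact hone a (σ₀.injective (heq.trans (map_one σ₀).symm))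
  -- the determinant is nonzero
  have hD : g2 * f1 - g1 * f2 ≠ 0 := by
    intro hD0
    -- sums of logs vanish
    have hsum : ∀ u : (𝓞 K)ˣ,
        Real.log (σ₀ (algebraMap (𝓞 K) K ↑u) ^ 2) + Real.log (σ₁ (algebraMap (𝓞 K) K ↑u) ^ 2)
          + Real.log (σ₂ (algebraMap (𝓞 K) K ↑u) ^ 2) = 0 := by
      intro u
      set t0 := σ₀ (algebraMap (𝓞 K) K ↑u)
      set t1 := σ₁ (algebraMap (𝓞 K) K ↑u)
      set t2 := σ₂ (algebraMap (𝓞 K) K ↑u)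
      have ht0 : t0 ≠ 0 := (map_ne_zero_iff σ₀ σ₀.injective).mpr (NumberField.Units.coe_ne_zero u)
      have ht1 : t1 ≠ 0 := (map_ne_zero_iff σ₁ σ₁.injective).mpr (NumberField.Units.coe_ne_zero u)
      have ht2 : t2 ≠ 0 := (map_ne_zero_iff σ₂ σ₂.injective).mpr (NumberField.Units.coe_ne_zero u)
      have hsq1 : t0 ^ 2 * (t1 ^ 2 * t2 ^ 2) = 1 := by
        rcases prod_three h3 σ₀ σ₁ σ₂ h01 h02 h12 u with h | h
        · rw [show t0 ^ 2 * (t1 ^ 2 * t2 ^ 2) = (t0 * t1 * t2) ^ 2 by ring, h]; norm_num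
        · rw [show t0 ^ 2 * (t1 ^ 2 * t2 ^ 2) = (t0 * t1 * t2) ^ 2 by ring, h]; norm_num
      have := congrArg Real.log hsq1
      rw [Real.log_mul (pow_ne_zero 2 ht0) (mul_ne_zero (pow_ne_zero 2 ht1) (pow_ne_zero 2 ht2)),
        Real.log_mul (pow_ne_zero 2 ht1) (pow_ne_zero 2 ht2), Real.log_one] at this
      linarith
    have hs1 : g1 + q1 + r1 = 0 := by
      have := hsum u₁; rw [← hb₁, ← hg1, ← hq1, ← hr1] at this; exact this
    have hs2 : g2 + q2 + r2 = 0 := by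
      have := hsum u₂; rw [← hb₂, ← hg2, ← hq2, ← hr2] at this; exact this
    have hg1ne : g1 ≠ 0 := by
      intro h
      have := hG (1, 0) (by simp [h])
      simpa using congrArg Prod.fst this
    have hA : q2 * g1 = q1 * g2 := by
      linear_combination (g1 * hs2 - g2 * hs1 - hD0) / 2
    have hBrel : r2 * g1 = r1 * g2 := by
      linear_combination (g1 * hs2 - g2 * hs1 + hD0) / 2
    -- small units galore
    set κ : ℝ := 1 + |q1 / g1| + |r1 / g1| with hκ
    have hκ1 : 1 ≤ κ := by rw [hκ]; linarith [abs_nonneg (q1 / g1), abs_nonneg (r1 / g1)]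
    have hκ0 : 0 < κ := by linarith
    set ε : ℝ := 1 / κ with hε
    have hε0 : 0 < ε := by positivity
    have hSinf := infinite_form_Ioo g1 g2 hG (-ε) (2 * ε) (by linarith)
    set S := {a : ℤ × ℤ | (a.1 : ℝ) * g1 + a.2 * g2 ∈ Set.Ioo (-ε) (-ε + 2 * ε)} with hS
    set B : ℝ := Real.exp 1 with hB
    have himg : (fun a => uPow K u₁ u₂ a) '' S
        ⊆ {x : K | IsIntegral ℤ x ∧ ∀ φ : K →+* ℂ, ‖φ x‖ ≤ B} := by
      rintro x ⟨a, haS, rfl⟩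
      have haG : |(a.1 : ℝ) * g1 + a.2 * g2| < ε := by
        rcases haS with ⟨hlo, hhi⟩
        rw [abs_lt]; constructor <;> [linarith; linarith]
      set Ga : ℝ := (a.1 : ℝ) * g1 + a.2 * g2 with hGa
      have hlq : (a.1 : ℝ) * q1 + a.2 * q2 = q1 / g1 * Ga := by
        rw [hGa, div_mul_eq_mul_div, eq_div_iff hg1ne]
        linear_combination (a.2 : ℝ) * hA
      have hlr : (a.1 : ℝ) * r1 + a.2 * r2 = r1 / g1 * Ga := by
        rw [hGa, div_mul_eq_mul_div, eq_div_iff hg1ne]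
        linear_combination (a.2 : ℝ) * hBrel
      have h0 : Real.log (σ₀ (uPow K u₁ u₂ a)) ≤ 1 := by
        rw [hlog σ₀ a, ← hg1, ← hg2]
        have h1' : (a.1 : ℝ) * g1 + a.2 * g2 ≤ |(a.1 : ℝ) * g1 + a.2 * g2| := le_abs_self _
        have h2' : ε ≤ 1 := by rw [hε, div_le_one hκ0]; exact hκ1
        rw [← hGa] at h1' ⊢
        linarith [haG]
      have h1 : Real.log (σ₁ (uPow K u₁ u₂ a)) ≤ 1 := by
        rw [hlog σ₁ a, ← hq1, ← hq2, hlq]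
        calc q1 / g1 * Ga ≤ |q1 / g1 * Ga| := le_abs_self _
          _ = |q1 / g1| * |Ga| := abs_mul _ _
          _ ≤ κ * ε := by
              apply mul_le_mul (by rw [hκ]; linarith [abs_nonneg (r1 / g1)])
                (le_of_lt haG) (abs_nonneg _) (le_of_lt hκ0)
          _ = 1 := by rw [hε]; field_simp
      have h2 : Real.log (σ₂ (uPow K u₁ u₂ a)) ≤ 1 := by
        rw [hlog σ₂ a, ← hr1, ← hr2, hlr]
        calc r1 / g1 * Ga ≤ |r1 / g1 * Ga| := le_abs_self _
          _ = |r1 / g1| * |Ga| := abs_mul _ _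
          _ ≤ κ * ε := by
              apply mul_le_mul (by rw [hκ]; linarith [abs_nonneg (q1 / g1)])
                (le_of_lt haG) (abs_nonneg _) (le_of_lt hκ0)
          _ = 1 := by rw [hε]; field_simp
      refine ⟨NumberField.RingOfIntegers.isIntegral_coe _, ?_⟩
      intro φ
      have hle : ∀ σ : K →+* ℝ, Real.log (σ (uPow K u₁ u₂ a)) ≤ 1 →
          ‖(Complex.ofRealHom.comp σ) (uPow K u₁ u₂ a)‖ ≤ B := by
        intro σ hσ1
        have : σ (uPow K u₁ u₂ a) ≤ Real.exp 1 := (Real.log_le_iff_le_exp (hval σ a)).mp hσ1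
        rw [RingHom.comp_apply]
        rw [Complex.ofRealHom_eq_coe, Complex.norm_real, Real.norm_eq_abs]
        rw [abs_of_pos (hval σ a)]
        rw [hB]
        exact this
      rcases emb_three h3 σ₀ σ₁ σ₂ h01 h02 h12 φ with rfl | rfl | rfl
      · exact hle σ₀ h0
      · exact hle σ₁ h1
      · exact hle σ₂ h2
    have hTfin := NumberField.Embeddings.finite_of_norm_le K ℂ B
    have hIinf : ((fun a => uPow K u₁ u₂ a) '' S).Infinite :=
      hSinf.image (fun a _ a' _ h => hUinj a a' h)
    exact hIinf (hTfin.subset himg)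
  -- conclude via the analytic lemma
  have hab : Real.log c₁ < Real.log c₂ := Real.log_lt_log hc₁ hc
  have hinf := key_infinite f1 f2 g1 g2 (Real.log c₁) (Real.log c₂) hab hF hG hD
  have himage := hinf.image (f := fun a => σ₀ (uPow K u₁ u₂ a))
    (fun a _ a' _ h => hUinj a a' (σ₀.injective h))
  apply Set.Infinite.mono _ himage
  rintro x ⟨a, ⟨hmem, hpos⟩, rfl⟩
  have hc₂0 : 0 < c₂ := hc₁.trans hc
  have hratio : 0 < σ₁ (uPow K u₁ u₂ a) / σ₂ (uPow K u₁ u₂ a) :=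
    div_pos (hval σ₁ a) (hval σ₂ a)
  have hlogratio : Real.log (σ₁ (uPow K u₁ u₂ a) / σ₂ (uPow K u₁ u₂ a))
      = (a.1 : ℝ) * f1 + (a.2 : ℝ) * f2 := by
    rw [Real.log_div (ne_of_gt (hval σ₁ a)) (ne_of_gt (hval σ₂ a)), hlog σ₁ a, hlog σ₂ a,
      ← hq1, ← hq2, ← hr1, ← hr2, hf1, hf2]
    ring
  refine ⟨a, rfl, ?_, ?_, ?_⟩
  · have : 0 < Real.log (σ₀ (uPow K u₁ u₂ a)) := by
      rw [hlog σ₀ a, ← hg1, ← hg2]; exact hpos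
    exact (Real.log_pos_iff (hval σ₀ a).le).mp this
  · apply (Real.log_lt_log_iff hc₁ hratio).mp
    rw [hlogratio]; exact hmem.1
  · apply (Real.log_lt_log_iff hratio hc₂0).mp
    rw [hlogratio]; exact hmem.2
end

section
/- Let K be a real number field of degree d+1 with embeddings σ_0 = id, σ_1, ..., σ_d (complex embeddings paired with conjugates), let Λ ⊆ K be a full-rank lattice, s ∈ Λ* \ {0}, and u a unit of Z_Λ. Define q_u = Tr(su) and γ_u by γ_u^d = |q_u| |σ_1(su) ⋯ σ_d(su)|. Then γ_u^d = |N(s)| · | su/|su| + Σ_{i=1}^d σ_i(su)/|su| |, and consequently, as u → ∞ along any sequence of dominant units (units satisfying t ≤ |u| ≤ κt and t^{-1/d} ≤ |σ_i(u)| ≤ κ t^{-1/d} for 1 ≤ i ≤ d, with t → ∞ and κ fixed), γ_u → |N(s)|^{1/d}. -/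
open Filter Topology

/-- A rational number that is integral over ℤ and has a multiplicative inverse
    that is also integral over ℤ has absolute value 1. -/
lemma aux_abs_norm_unit (q q' : ℚ) (hq : IsIntegral ℤ q) (hq' : IsIntegral ℤ q')
    (hqq' : q * q' = 1) : |q| = 1 := by
  obtain ⟨a, ha⟩ := IsIntegrallyClosed.isIntegral_iff.mp hq
  obtain ⟨b, hb⟩ := IsIntegrallyClosed.isIntegral_iff.mp hq'
  have ha' : (a : ℚ) = q := by simpa using ha
  have hb' : (b : ℚ) = q' := by simpa using hb
  have hab : a * b = 1 := by
    have : ((a * b : ℤ) : ℚ) = ((1 : ℤ) : ℚ) := by push_cast [ha', hb']; simpa using hqq'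
    exact_mod_cast this
  have : a = 1 ∨ a = -1 := Int.isUnit_iff.mp (IsUnit.of_mul_eq_one b hab)
  rcases this with h | h <;> simp [← ha', h]

/-- Let K be a real number field of degree d+1 with real embedding σ₀ (the
    identity) and remaining embeddings σ₁, ..., σ_d into ℂ (so trace and norm are
    given by the sum resp. product over all embeddings). Let s ≠ 0 and let u_n be
    a sequence of algebraic-integer units which is dominant:
    t_n ≤ |u_n| ≤ κ t_n and t_n^{-1/d} ≤ |σ_i(u_n)| ≤ κ t_n^{-1/d}, t_n → ∞.
    With q_u = Tr(su) and γ_u^d = |q_u| |σ₁(su) ⋯ σ_d(su)|, one has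
    γ_u^d = |N(s)| · |su/|su| + Σ_i σ_i(su)/|su|| for every n, and
    γ_{u_n} → |N(s)|^{1/d}. -/
theorem stmt16 (K : Type*) [Field K] [NumberField K] (d : ℕ) (hd : 0 < d)
    (hrank : Module.finrank ℚ K = d + 1)
    (σ₀ : K →+* ℝ) (σ : Fin d → (K →+* ℂ))
    (htr : ∀ x : K, ((Algebra.trace ℚ K x : ℚ) : ℂ) = ((σ₀ x : ℝ) : ℂ) + ∑ i, σ i x)
    (hnorm : ∀ x : K, ((Algebra.norm ℚ x : ℚ) : ℂ) = ((σ₀ x : ℝ) : ℂ) * ∏ i, σ i x)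
    (s : K) (hs : s ≠ 0)
    (u : ℕ → K) (hu : ∀ n, IsIntegral ℤ (u n) ∧ IsIntegral ℤ (u n)⁻¹)
    (κ : ℝ) (hκ : 1 < κ) (t : ℕ → ℝ) (ht1 : ∀ n, 1 < t n)
    (ht : Tendsto t atTop atTop)
    (hdom : ∀ n, t n ≤ |σ₀ (u n)| ∧ |σ₀ (u n)| ≤ κ * t n ∧
      ∀ i, t n ^ (-(1 : ℝ) / d) ≤ Norm.norm (σ i (u n)) ∧
        Norm.norm (σ i (u n)) ≤ κ * t n ^ (-(1 : ℝ) / d)) :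
    (∀ n, |((Algebra.trace ℚ K (s * u n) : ℚ) : ℝ)| *
        ∏ i, Norm.norm (σ i (s * u n)) =
      |((Algebra.norm ℚ s : ℚ) : ℝ)| *
        Norm.norm ((((σ₀ (s * u n) : ℝ) : ℂ) + ∑ i, σ i (s * u n)) /
          ((|σ₀ (s * u n)| : ℝ) : ℂ))) ∧
    Tendsto (fun n => (|((Algebra.trace ℚ K (s * u n) : ℚ) : ℝ)| *
        ∏ i, Norm.norm (σ i (s * u n))) ^ ((1 : ℝ) / d)) atTop
      (𝓝 (|((Algebra.norm ℚ s : ℚ) : ℝ)| ^ ((1 : ℝ) / d))) := by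
  have ht0 : ∀ n, (0 : ℝ) < t n := fun n => lt_trans one_pos (ht1 n)
  -- u n ≠ 0
  have hσ0u : ∀ n, σ₀ (u n) ≠ 0 := by
    intro n h
    have := (hdom n).1
    rw [h, abs_zero] at this
    linarith [ht0 n]
  have hu0 : ∀ n, u n ≠ 0 := fun n h => hσ0u n (by rw [h, map_zero])
  have hsu0 : ∀ n, s * u n ≠ 0 := fun n => mul_ne_zero hs (hu0 n)
  have hσ0su : ∀ n, σ₀ (s * u n) ≠ 0 := fun n h =>
    hsu0 n ((map_eq_zero σ₀).mp h)
  have hσ0su' : ∀ n, (0 : ℝ) < |σ₀ (s * u n)| := fun n => abs_pos.mpr (hσ0su n)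
  -- |N(u n)| = 1
  have hNu : ∀ n, |((Algebra.norm ℚ (u n) : ℚ) : ℝ)| = 1 := by
    intro n
    have h1 : Algebra.norm ℚ (u n) * Algebra.norm ℚ (u n)⁻¹ = 1 := by
      rw [← map_mul, mul_inv_cancel₀ (hu0 n), map_one]
    have := aux_abs_norm_unit _ _ (Algebra.isIntegral_norm ℚ (hu n).1)
      (Algebra.isIntegral_norm ℚ (hu n).2) h1
    rw [← Rat.cast_abs]
    exact_mod_cast this
  -- norms vs products of embeddings
  have habsnorm : ∀ x : K, |((Algebra.norm ℚ x : ℚ) : ℝ)| =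
      |σ₀ x| * ∏ i, Norm.norm (σ i x) := by
    intro x
    have h := congrArg (‖·‖ : ℂ → ℝ) (hnorm x)
    rw [norm_mul, norm_prod] at h
    rw [show ((Algebra.norm ℚ x : ℚ) : ℂ) = (((Algebra.norm ℚ x : ℚ) : ℝ) : ℂ) by
      push_cast; ring] at h
    simp only [Complex.norm_real, Real.norm_eq_abs] at h
    exact h
  have hprod : ∀ n, ∏ i, Norm.norm (σ i (s * u n)) =
      |((Algebra.norm ℚ s : ℚ) : ℝ)| / |σ₀ (s * u n)| := by
    intro n
    have h1 : |((Algebra.norm ℚ (s * u n) : ℚ) : ℝ)| =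
        |((Algebra.norm ℚ s : ℚ) : ℝ)| := by
      rw [map_mul]
      push_cast
      rw [abs_mul, hNu n, mul_one]
    have h2 := habsnorm (s * u n)
    rw [h1] at h2
    rw [eq_div_iff (ne_of_gt (hσ0su' n)), mul_comm]
    exact h2.symm
  -- trace abs
  have htrabs : ∀ n, Norm.norm ((((σ₀ (s * u n) : ℝ) : ℂ) + ∑ i, σ i (s * u n)))
      = |((Algebra.trace ℚ K (s * u n) : ℚ) : ℝ)| := by
    intro n
    rw [← htr (s * u n)]
    rw [show ((Algebra.trace ℚ K (s * u n) : ℚ) : ℂ)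
        = (((Algebra.trace ℚ K (s * u n) : ℚ) : ℝ) : ℂ) by push_cast; ring]
    exact (Complex.norm_real _).trans (Real.norm_eq_abs _)
  have hNs : (0 : ℝ) < |((Algebra.norm ℚ s : ℚ) : ℝ)| := by
    have : Algebra.norm ℚ s ≠ 0 := (Algebra.norm_ne_zero_iff).mpr hs
    have : ((Algebra.norm ℚ s : ℚ) : ℝ) ≠ 0 := by exact_mod_cast this
    exact abs_pos.mpr this
  -- first claim
  have hmain : ∀ n, |((Algebra.trace ℚ K (s * u n) : ℚ) : ℝ)| *
        ∏ i, Norm.norm (σ i (s * u n)) =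
      |((Algebra.norm ℚ s : ℚ) : ℝ)| *
        Norm.norm ((((σ₀ (s * u n) : ℝ) : ℂ) + ∑ i, σ i (s * u n)) /
          ((|σ₀ (s * u n)| : ℝ) : ℂ)) := by
    intro n
    rw [norm_div, htrabs n, hprod n, Complex.norm_real, Real.norm_eq_abs, abs_abs]
    ring
  refine ⟨hmain, ?_⟩
  -- the limit
  set Ns := |((Algebra.norm ℚ s : ℚ) : ℝ)| with hNsdef
  -- error term
  set e : ℕ → ℝ := fun n =>
    Norm.norm (∑ i, σ i (s * u n)) / |σ₀ (s * u n)| with he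
  have he0 : ∀ n, 0 ≤ e n := fun n =>
    div_nonneg (norm_nonneg _) (abs_nonneg _)
  have heC : ∃ C : ℝ, 0 ≤ C ∧ ∀ n, e n ≤ C / t n := by
    refine ⟨(∑ i, Norm.norm (σ i s)) * κ / |σ₀ s|, ?_, ?_⟩
    · apply div_nonneg
      · exact mul_nonneg (Finset.sum_nonneg fun i _ => norm_nonneg _)
          (le_of_lt (lt_trans one_pos hκ))
      · exact abs_nonneg _
    · intro n
      have hσ0s : (0 : ℝ) < |σ₀ s| := by
        rw [abs_pos]; exact fun h => hs ((map_eq_zero σ₀).mp h)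
      have hnum : Norm.norm (∑ i, σ i (s * u n)) ≤ (∑ i, Norm.norm (σ i s)) * κ := by
        calc Norm.norm (∑ i, σ i (s * u n)) ≤ ∑ i, Norm.norm (σ i (s * u n)) :=
              norm_sum_le _ _
          _ ≤ ∑ i, Norm.norm (σ i s) * κ := by
              apply Finset.sum_le_sum
              intro i _
              rw [map_mul, norm_mul]
              apply mul_le_mul_of_nonneg_left _ (norm_nonneg _)
              have h1 := ((hdom n).2.2 i).2
              have h2 : t n ^ (-(1:ℝ) / d) ≤ 1 := by
                apply Real.rpow_le_one_of_one_le_of_nonpos (le_of_lt (ht1 n))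
                apply div_nonpos_of_nonpos_of_nonneg <;> simp
              calc Norm.norm (σ i (u n)) ≤ κ * t n ^ (-(1:ℝ)/d) := h1
                _ ≤ κ * 1 :=
                    mul_le_mul_of_nonneg_left h2 (le_of_lt (lt_trans one_pos hκ))
                _ = κ := mul_one κ
          _ = (∑ i, Norm.norm (σ i s)) * κ := by rw [Finset.sum_mul]
      have hden : |σ₀ s| * t n ≤ |σ₀ (s * u n)| := by
        rw [map_mul, abs_mul]
        exact mul_le_mul_of_nonneg_left (hdom n).1 (le_of_lt hσ0s)
      have hd0 : (0 : ℝ) < |σ₀ s| * t n := mul_pos hσ0s (ht0 n)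
      have hAnn : (0 : ℝ) ≤ (∑ i, Norm.norm (σ i s)) * κ :=
        mul_nonneg (Finset.sum_nonneg fun i _ => norm_nonneg _)
          (le_of_lt (lt_trans one_pos hκ))
      calc e n ≤ ((∑ i, Norm.norm (σ i s)) * κ) / (|σ₀ s| * t n) :=
            div_le_div₀ hAnn hnum hd0 hden
        _ = (∑ i, Norm.norm (σ i s)) * κ / |σ₀ s| / t n := by
            rw [div_div]
  -- e → 0
  have heto : Tendsto e atTop (𝓝 0) := by
    obtain ⟨C, hC0, hC⟩ := heC
    have h1 : Tendsto (fun n => C / t n) atTop (𝓝 0) :=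
      Tendsto.div_atTop tendsto_const_nhds ht
    exact squeeze_zero he0 hC h1
  -- ratio → 1
  set r : ℕ → ℝ := fun n =>
    |((Algebra.trace ℚ K (s * u n) : ℚ) : ℝ)| / |σ₀ (s * u n)| with hr
  have hrlo : ∀ n, 1 - e n ≤ r n := by
    intro n
    rw [hr]
    rw [le_div_iff₀ (hσ0su' n)]
    have h1 : |σ₀ (s * u n)| - Norm.norm (∑ i, σ i (s * u n)) ≤
        |((Algebra.trace ℚ K (s * u n) : ℚ) : ℝ)| := by
      rw [← htrabs n]
      have h0 := norm_add_le
        (((σ₀ (s * u n) : ℝ) : ℂ) + ∑ i, σ i (s * u n)) (-(∑ i, σ i (s * u n)))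
      rw [add_neg_cancel_right, norm_neg, Complex.norm_real, Real.norm_eq_abs] at h0
      linarith
    have h2 : e n * |σ₀ (s * u n)| = Norm.norm (∑ i, σ i (s * u n)) := by
      rw [he]
      exact div_mul_cancel₀ _ (ne_of_gt (hσ0su' n))
    nlinarith [h1, h2]
  have hrhi : ∀ n, r n ≤ 1 + e n := by
    intro n
    rw [hr]
    rw [div_le_iff₀ (hσ0su' n)]
    have h1 : |((Algebra.trace ℚ K (s * u n) : ℚ) : ℝ)| ≤
        |σ₀ (s * u n)| + Norm.norm (∑ i, σ i (s * u n)) := by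
      rw [← htrabs n]
      have h0 := norm_add_le (((σ₀ (s * u n) : ℝ) : ℂ))
        (∑ i, σ i (s * u n))
      rwa [Complex.norm_real, Real.norm_eq_abs] at h0
    have h2 : e n * |σ₀ (s * u n)| = Norm.norm (∑ i, σ i (s * u n)) := by
      rw [he]
      exact div_mul_cancel₀ _ (ne_of_gt (hσ0su' n))
    nlinarith [h1, h2]
  have hrto : Tendsto r atTop (𝓝 1) := by
    have hlo : Tendsto (fun n => 1 - e n) atTop (𝓝 1) := by
      simpa only [sub_zero] using heto.const_sub (1 : ℝ)
    have hhi : Tendsto (fun n => 1 + e n) atTop (𝓝 1) := by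
      simpa only [add_zero] using heto.const_add (1 : ℝ)
    exact tendsto_of_tendsto_of_tendsto_of_le_of_le hlo hhi hrlo hrhi
  have hfun : (fun n => (|((Algebra.trace ℚ K (s * u n) : ℚ) : ℝ)| *
        ∏ i, Norm.norm (σ i (s * u n))) ^ ((1 : ℝ) / d)) =
      fun n => (Ns * r n) ^ ((1 : ℝ) / d) := by
    funext n
    congr 1
    rw [hprod n, hr]
    ring
  rw [hfun]
  have hbase : Tendsto (fun n => Ns * r n) atTop (𝓝 Ns) := by
    simpa only [mul_one] using hrto.const_mul Ns
  exact hbase.rpow_const (Or.inr (by positivity))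
end
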